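/- arXiv:2306.16334 — 2 statements merged into one kernel-verified Lean document; each statement's English description precedes it below -/
import Mathlib

section
/- Recovery of the partition into parallel-separator-sets: Let S and S' be open connected subsets of ℝ^d and h : S → S' a smooth diffeomorphism. Let A be a discrete coordination on S whose axis-separator set 𝒢(A) has a backbone, let B be a discrete coordination on S', and suppose h(grid_S(A)) = grid_{S'}(B). For each axis i, let 𝒢^{(i)}(A) = {Γ_S(i,A_{i,k}) : 1 ≤ k ≤ n_i} and 𝒢^{(j)}(B) = {Γ_{S'}(j,B_{j,k}) : 1 ≤ k ≤ m_j}. Then there exists a permutation σ of {1,…,d} such that for every i, H ∈ 𝒢^{(i)}(A) if and only if h(H) ∈ 𝒢^{(σ(i))}(B); in particular H ↦ h(H) restricts to a bijection from 𝒢^{(i)}(A) onto 𝒢^{(σ(i))}(B). -/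
open Set MeasureTheory Topology

noncomputable section

abbrev Euc (d : ℕ) := EuclideanSpace ℝ (Fin d)

/-- Axis separator: points of `S` whose `i`-th coordinate equals `τ`. -/
def Gamma {d : ℕ} (S : Set (Euc d)) (i : Fin d) (τ : ℝ) : Set (Euc d) :=
  {z | z ∈ S ∧ z i = τ}

/-- Positive half: points of `S` whose `i`-th coordinate is greater than `τ`. -/
def GammaPos {d : ℕ} (S : Set (Euc d)) (i : Fin d) (τ : ℝ) : Set (Euc d) :=
  {z | z ∈ S ∧ τ < z i}

/-- Negative half: points of `S` whose `i`-th coordinate is less than `τ`. -/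
def GammaNeg {d : ℕ} (S : Set (Euc d)) (i : Fin d) (τ : ℝ) : Set (Euc d) :=
  {z | z ∈ S ∧ z i < τ}

/-- `Γ_S(i,τ)` is an axis-separator of `S`: it is nonempty and connected, and both of
its halves are nonempty and connected. (`IsConnected` includes nonemptiness.) -/
def IsAxisSeparator {d : ℕ} (S : Set (Euc d)) (i : Fin d) (τ : ℝ) : Prop :=
  IsConnected (Gamma S i τ) ∧ IsConnected (GammaPos S i τ) ∧ IsConnected (GammaNeg S i τ)

/-- A smooth diffeomorphism from `S` onto `S'` with explicit inverse `hinv`. -/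
structure IsSmoothDiffeoOn {d : ℕ} (h hinv : Euc d → Euc d) (S S' : Set (Euc d)) : Prop where
  mapsTo : Set.MapsTo h S S'
  mapsTo_inv : Set.MapsTo hinv S' S
  left_inv : ∀ z ∈ S, hinv (h z) = z
  right_inv : ∀ z' ∈ S', h (hinv z') = z'
  smooth : ContDiffOn ℝ (⊤ : ℕ∞) h S
  smooth_inv : ContDiffOn ℝ (⊤ : ℕ∞) hinv S'

/-- A discrete coordination on `S`: for each axis `i`, a strictly increasing nonempty tuple
of thresholds, each giving an axis-separator of `S`. -/
structure DiscreteCoordination {d : ℕ} (S : Set (Euc d)) where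
  n : Fin d → ℕ
  n_pos : ∀ i, 0 < n i
  A : (i : Fin d) → Fin (n i) → ℝ
  mono : ∀ i, StrictMono (A i)
  sep : ∀ i k, IsAxisSeparator S i (A i k)

/-- The grid of a discrete coordination: the union of all its axis-separators. -/
def DiscreteCoordination.grid {d : ℕ} {S : Set (Euc d)} (C : DiscreteCoordination S) :
    Set (Euc d) :=
  ⋃ (i : Fin d), ⋃ (k : Fin (C.n i)), Gamma S i (C.A i k)

/-- The parallel-separator-set along axis `i`. -/
def DiscreteCoordination.axisSet {d : ℕ} {S : Set (Euc d)} (C : DiscreteCoordination S)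
    (i : Fin d) : Set (Set (Euc d)) :=
  {H | ∃ k : Fin (C.n i), H = Gamma S i (C.A i k)}

/-- The axis-separator set of a discrete coordination. -/
def DiscreteCoordination.sepSet {d : ℕ} {S : Set (Euc d)} (C : DiscreteCoordination S) :
    Set (Set (Euc d)) :=
  {H | ∃ (i : Fin d) (k : Fin (C.n i)), H = Gamma S i (C.A i k)}

/-- A backbone: a choice of one separator per axis such that they all meet in a single
point and each of them meets every separator of the grid lying on a different axis. -/
def DiscreteCoordination.HasBackbone {d : ℕ} {S : Set (Euc d)}
    (C : DiscreteCoordination S) : Prop :=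
  ∃ kstar : (i : Fin d) → Fin (C.n i),
    (∃ z : Euc d, (⋂ (i : Fin d), Gamma S i (C.A i (kstar i))) = {z}) ∧
    ∀ (i j : Fin d), j ≠ i → ∀ k : Fin (C.n j),
      (Gamma S i (C.A i (kstar i)) ∩ Gamma S j (C.A j k)).Nonempty

/-- Quantization: `Q(x;T) = Σ_k 1[x ≥ T_k]`. -/
def Q {K : ℕ} (x : ℝ) (T : Fin K → ℝ) : ℕ :=
  (Finset.univ.filter fun k : Fin K => T k ≤ x).card

/-- Quantization with order reversal: `Q⁻(x;T) = Σ_k 1[x ≤ T_k]`. -/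
def Qneg {K : ℕ} (x : ℝ) (T : Fin K → ℝ) : ℕ :=
  (Finset.univ.filter fun k : Fin K => x ≤ T k).card

/-- Signed quantization: `Q^{+1} = Q` and `Q^{-1} = Q⁻`. -/
def Qsgn {K : ℕ} (s : ℤ) (x : ℝ) (T : Fin K → ℝ) : ℕ :=
  if s = 1 then Q x T else Qneg x T

/-- `μ` (absolutely continuous w.r.t. Lebesgue) has a non-removable discontinuity at `z`
if every measurable density of `μ` w.r.t. Lebesgue measure is discontinuous at `z`. -/
def HasNonRemovableDiscont {d : ℕ} (μ : Measure (Euc d)) (z : Euc d) : Prop :=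
  ∀ q : Euc d → ENNReal, Measurable q → μ = volume.withDensity q → ¬ ContinuousAt q z

/-- `T` has exactly two connected components, namely `Cp` and `Cm`. -/
def TwoComponents {d : ℕ} (T Cp Cm : Set (Euc d)) : Prop :=
  Cp ≠ Cm ∧
  (∃ x ∈ T, connectedComponentIn T x = Cp) ∧
  (∃ x ∈ T, connectedComponentIn T x = Cm) ∧
  ∀ x ∈ T, connectedComponentIn T x = Cp ∨ connectedComponentIn T x = Cm

/-- The intersection set of a finite family of separators: points lying on at least two
distinct members. -/
def interSet {d M : ℕ} (H : Fin M → Set (Euc d)) : Set (Euc d) :=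
  ⋃ (m : Fin M), ⋃ (m' : Fin M), ⋃ (_ : m ≠ m'), H m ∩ H m'

namespace RPaux

open Metric

variable {d : ℕ}

lemma coord_abs_le_dist (x y : Euc d) (i : Fin d) : |x i - y i| ≤ dist x y := by
  rw [EuclideanSpace.dist_eq, show |x i - y i| = Real.sqrt ((x i - y i)^2) by rw [Real.sqrt_sq_eq_abs]]
  apply Real.sqrt_le_sqrt
  have : (x i - y i)^2 = dist (x i) (y i)^2 := by rw [Real.dist_eq, sq_abs]
  rw [this]
  exact Finset.single_le_sum (f := fun j => dist (x j) (y j)^2) (fun j _ => sq_nonneg _) (Finset.mem_univ i)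

lemma sum_coord (s : Finset (Fin d)) (f : Fin d → Euc d) (j : Fin d) :
    (∑ v ∈ s, f v) j = ∑ v ∈ s, f v j := map_sum (EuclideanSpace.proj j : Euc d →L[ℝ] ℝ) f s

lemma single_coord (i j : Fin d) (a : ℝ) :
    (EuclideanSpace.single i a : Euc d) j = if j = i then a else 0 :=
  EuclideanSpace.single_apply i a j

variable {S S' : Set (Euc d)}

lemma gamma_subset (i : Fin d) (τ : ℝ) : Gamma S i τ ⊆ S := fun _ hz => hz.1

lemma grid_subset (C : DiscreteCoordination S) : C.grid ⊆ S := by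
  intro z hz
  simp only [DiscreteCoordination.grid, mem_iUnion] at hz
  obtain ⟨i, k, hz⟩ := hz
  exact hz.1

/-- a nonempty separator contained in another one: equal axes and thresholds. -/
lemma gamma_le_gamma (hS : IsOpen S) {i j : Fin d} {τ θ : ℝ}
    (hne : (Gamma S i τ).Nonempty) (hsub : Gamma S i τ ⊆ Gamma S j θ) : i = j ∧ τ = θ := by
  obtain ⟨z, hzS, hzi⟩ := hne
  by_cases hij : i = j
  · subst hij
    exact ⟨rfl, by rw [← hzi, (hsub ⟨hzS, hzi⟩).2]⟩
  · exfalso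
    obtain ⟨ε, hε, hball⟩ := Metric.isOpen_iff.1 hS z hzS
    set z' : Euc d := z + EuclideanSpace.single j (ε/2) with hz'
    have hz'mem : z' ∈ S := by
      apply hball
      have : dist z' z = ‖EuclideanSpace.single j (ε/2)‖ := by
        rw [hz', dist_eq_norm, add_sub_cancel_left]
      rw [Metric.mem_ball, this, EuclideanSpace.norm_single]
      rw [Real.norm_eq_abs, abs_of_pos (by linarith)]; linarith
    have hz'j : z' j = z j + ε/2 := by
      show z j + (EuclideanSpace.single j (ε/2) : Euc d) j = _
      rw [single_coord, if_pos rfl]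
    have hz'i : z' i = z i := by
      show z i + (EuclideanSpace.single j (ε/2) : Euc d) i = _
      rw [single_coord, if_neg hij, add_zero]
    have h1 : z' ∈ Gamma S i τ := ⟨hz'mem, by rw [hz'i, hzi]⟩
    have h2 := (hsub h1).2
    have h3 := (hsub ⟨hzS, hzi⟩).2
    rw [hz'j, h3] at h2
    linarith

/-- two separators sharing a point that lie on the same axis are equal as data. -/
lemma gamma_eq_of_eq (hS : IsOpen S) {i j : Fin d} {τ θ : ℝ}
    (hne : (Gamma S i τ).Nonempty) (heq : Gamma S i τ = Gamma S j θ) : i = j ∧ τ = θ :=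
  gamma_le_gamma hS hne heq.le


-- ====================== axes through a point, local grid structure ======================

open Classical in
/-- the axes whose (some) threshold passes through `x`. -/
def axesOf (C : DiscreteCoordination S) (x : Euc d) : Finset (Fin d) :=
  Finset.univ.filter fun i => ∃ k, x i = C.A i k

lemma mem_axesOf {C : DiscreteCoordination S} {x : Euc d} {i : Fin d} :
    i ∈ axesOf C x ↔ ∃ k, x i = C.A i k := by simp [axesOf]

lemma mem_grid_iff {C : DiscreteCoordination S} {x : Euc d} :
    x ∈ C.grid ↔ x ∈ S ∧ ∃ i, i ∈ axesOf C x := by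
  constructor
  · intro hx
    simp only [DiscreteCoordination.grid, mem_iUnion] at hx
    obtain ⟨i, k, hS, hik⟩ := hx
    exact ⟨hS, i, mem_axesOf.2 ⟨k, hik⟩⟩
  · rintro ⟨hS, i, hi⟩
    obtain ⟨k, hk⟩ := mem_axesOf.1 hi
    simp only [DiscreteCoordination.grid, mem_iUnion]
    exact ⟨i, k, hS, hk⟩

/-- `ε` is a "local grid radius" at `x`: the ball is inside `S` and any threshold
hyperplane met by the ball passes through `x`. -/
def locGrid (C : DiscreteCoordination S) (x : Euc d) (ε : ℝ) : Prop :=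
  0 < ε ∧ ball x ε ⊆ S ∧ ∀ z ∈ ball x ε, ∀ i k, z i = C.A i k → x i = C.A i k

lemma exists_locGrid (hS : IsOpen S) (C : DiscreteCoordination S) {x : Euc d} (hx : x ∈ S) :
    ∃ ε, locGrid C x ε := by
  classical
  obtain ⟨ε₁, hε₁, hball⟩ := Metric.isOpen_iff.1 hS x hx
  set F : Finset ((i : Fin d) × Fin (C.n i)) :=
    Finset.univ.filter (fun p => x p.1 ≠ C.A p.1 p.2) with hF
  set T : Finset ℝ := insert ε₁ (F.image fun p => |x p.1 - C.A p.1 p.2|) with hT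
  have hTne : T.Nonempty := ⟨ε₁, Finset.mem_insert_self _ _⟩
  set ε := T.min' hTne with hε
  have hεpos : 0 < ε := by
    rcases Finset.mem_insert.1 (T.min'_mem hTne) with h1 | h1
    · show (0:ℝ) < T.min' hTne; rw [h1]; exact hε₁
    · obtain ⟨p, hp, hpe⟩ := Finset.mem_image.1 h1
      rw [Finset.mem_filter] at hp
      show (0:ℝ) < T.min' hTne
      rw [← hpe]
      exact abs_pos.2 (sub_ne_zero.2 hp.2)
  have hεle : ε ≤ ε₁ := Finset.min'_le _ _ (Finset.mem_insert_self _ _)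
  refine ⟨ε, hεpos, fun z hz => hball (Metric.mem_ball.2 (lt_of_lt_of_le (Metric.mem_ball.1 hz) hεle)), ?_⟩
  intro z hz i k hzik
  by_contra hne
  have hmem : |x i - C.A i k| ∈ T :=
    Finset.mem_insert.2 (Or.inr
      (Finset.mem_image.2 ⟨⟨i, k⟩, Finset.mem_filter.2 ⟨Finset.mem_univ _, hne⟩, rfl⟩))
  have h1 : ε ≤ |x i - C.A i k| := Finset.min'_le _ _ hmem
  have h2 : |x i - z i| ≤ dist x z := coord_abs_le_dist x z i
  rw [dist_comm] at h2
  have h3 := Metric.mem_ball.1 hz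
  rw [← hzik] at h1
  linarith

lemma locGrid.mono {C : DiscreteCoordination S} {x : Euc d} {ε ε' : ℝ}
    (hl : locGrid C x ε) (hle : ε' ≤ ε) (hpos : 0 < ε') : locGrid C x ε' :=
  ⟨hpos, fun z hz => hl.2.1 (Metric.mem_ball.2 (lt_of_lt_of_le (Metric.mem_ball.1 hz) hle)),
   fun z hz => hl.2.2 z (Metric.mem_ball.2 (lt_of_lt_of_le (Metric.mem_ball.1 hz) hle))⟩

lemma locGrid.coord_eq {C : DiscreteCoordination S} {x z : Euc d} {ε : ℝ}
    (hl : locGrid C x ε) (hz : z ∈ ball x ε) {i : Fin d} (hi : i ∈ axesOf C z) :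
    z i = x i ∧ i ∈ axesOf C x := by
  obtain ⟨k, hk⟩ := mem_axesOf.1 hi
  have hx := hl.2.2 z hz i k hk
  exact ⟨by rw [hk, hx], mem_axesOf.2 ⟨k, hx⟩⟩

lemma locGrid.grid_iff {C : DiscreteCoordination S} {x z : Euc d} {ε : ℝ}
    (hl : locGrid C x ε) (hz : z ∈ ball x ε) :
    z ∈ C.grid ↔ ∃ i ∈ axesOf C x, z i = x i := by
  constructor
  · intro hg
    obtain ⟨_, i, hi⟩ := mem_grid_iff.1 hg
    have := hl.coord_eq hz hi
    exact ⟨i, this.2, this.1⟩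
  · rintro ⟨i, hi, hzi⟩
    obtain ⟨k, hk⟩ := mem_axesOf.1 hi
    refine mem_grid_iff.2 ⟨hl.2.1 hz, i, mem_axesOf.2 ⟨k, by rw [hzi, hk]⟩⟩

-- ====================== homeomorphism helpers ======================

variable {h hinv : Euc d → Euc d}

lemma diffeo_symm (hd : IsSmoothDiffeoOn h hinv S S') : IsSmoothDiffeoOn hinv h S' S :=
  ⟨hd.mapsTo_inv, hd.mapsTo, hd.right_inv, hd.left_inv, hd.smooth_inv, hd.smooth⟩

lemma diffeo_injOn (hd : IsSmoothDiffeoOn h hinv S S') : Set.InjOn h S := by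
  intro a ha b hb hab
  rw [← hd.left_inv a ha, ← hd.left_inv b hb, hab]

lemma diffeo_image (hd : IsSmoothDiffeoOn h hinv S S') {V : Set (Euc d)} (hVS : V ⊆ S) :
    h '' V = S' ∩ hinv ⁻¹' V := by
  ext z'
  constructor
  · rintro ⟨z, hz, rfl⟩
    exact ⟨hd.mapsTo (hVS hz), by rw [mem_preimage, hd.left_inv z (hVS hz)]; exact hz⟩
  · rintro ⟨hz', hzv⟩
    exact ⟨hinv z', hzv, hd.right_inv z' hz'⟩

lemma diffeo_image_open (hd : IsSmoothDiffeoOn h hinv S S') (hS' : IsOpen S')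
    {V : Set (Euc d)} (hVS : V ⊆ S) (hV : IsOpen V) : IsOpen (h '' V) := by
  rw [diffeo_image hd hVS]
  exact ContinuousOn.isOpen_inter_preimage hd.smooth_inv.continuousOn hS' hV

lemma diffeo_grid_inv (hd : IsSmoothDiffeoOn h hinv S S')
    {CA : DiscreteCoordination S} {CB : DiscreteCoordination S'}
    (hgrid : h '' CA.grid = CB.grid) : hinv '' CB.grid = CA.grid := by
  rw [← hgrid]
  ext z
  constructor
  · rintro ⟨z', ⟨w, hw, rfl⟩, rfl⟩
    rwa [hd.left_inv w (grid_subset CA hw)]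
  · intro hz
    exact ⟨h z, ⟨z, hz, rfl⟩, hd.left_inv z (grid_subset CA hz)⟩

/-- image of a subset of `S` avoiding the grid avoids the other grid, and conversely. -/
lemma diffeo_image_offgrid (hd : IsSmoothDiffeoOn h hinv S S')
    {CA : DiscreteCoordination S} {CB : DiscreteCoordination S'}
    (hgrid : h '' CA.grid = CB.grid) {z : Euc d} (hz : z ∈ S) :
    h z ∈ CB.grid ↔ z ∈ CA.grid := by
  constructor
  · intro hb
    rw [← hgrid] at hb
    obtain ⟨w, hw, hweq⟩ := hb
    rwa [← diffeo_injOn hd (grid_subset CA hw) hz hweq]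
  · intro ha
    rw [← hgrid]
    exact ⟨z, ha, rfl⟩

lemma diffeo_contAt (hd : IsSmoothDiffeoOn h hinv S S') (hS : IsOpen S) {x : Euc d}
    (hx : x ∈ S) : ContinuousAt h x :=
  (hd.smooth.continuousOn x hx).continuousAt (hS.mem_nhds hx)

/-- find a ball around x mapped into a given neighborhood of h x, and inside a given ball. -/
lemma diffeo_nest (hd : IsSmoothDiffeoOn h hinv S S') (hS : IsOpen S) {x : Euc d}
    (hx : x ∈ S) {ρ δ : ℝ} (hρ : 0 < ρ) (hδ : 0 < δ) :
    ∃ ε > 0, ε ≤ δ ∧ ball x ε ⊆ S ∧ h '' (ball x ε) ⊆ ball (h x) ρ := by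
  have hc := diffeo_contAt hd hS hx
  rw [Metric.continuousAt_iff] at hc
  obtain ⟨ε₀, hε₀, hball⟩ := hc ρ hρ
  obtain ⟨ε₁, hε₁, hball1⟩ := Metric.isOpen_iff.1 hS x hx
  refine ⟨min δ (min ε₀ ε₁), by positivity, min_le_left _ _, ?_, ?_⟩
  · intro z hz
    exact hball1 (Metric.mem_ball.2 (lt_of_lt_of_le (Metric.mem_ball.1 hz)
      (le_trans (min_le_right _ _) (min_le_right _ _))))
  · rintro _ ⟨z, hz, rfl⟩
    exact Metric.mem_ball.2 (hball (lt_of_lt_of_le (Metric.mem_ball.1 hz)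
      (le_trans (min_le_right _ _) (min_le_left _ _))))



-- ====================== orthants and walls ======================

/-- the open "orthant" of the ball `ball x ε` determined by sign pattern `σ` on axes `I`. -/
def orth (x : Euc d) (ε : ℝ) (I σ : Finset (Fin d)) : Set (Euc d) :=
  ball x ε ∩ {z | ∀ i ∈ I, if i ∈ σ then x i < z i else z i < x i}

/-- the relatively open piece of the hyperplane `z a = x a` with sign pattern `σ` on `I \ {a}`. -/
def wall (x : Euc d) (ε : ℝ) (I : Finset (Fin d)) (a : Fin d) (σ : Finset (Fin d)) : Set (Euc d) :=
  ball x ε ∩ {z | z a = x a ∧ ∀ i ∈ I, i ≠ a → if i ∈ σ then x i < z i else z i < x i}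

lemma orth_open (x : Euc d) (ε : ℝ) (I σ : Finset (Fin d)) : IsOpen (orth x ε I σ) := by
  apply IsOpen.inter isOpen_ball
  have : {z : Euc d | ∀ i ∈ I, if i ∈ σ then x i < z i else z i < x i} =
      ⋂ i ∈ I, {z : Euc d | if i ∈ σ then x i < z i else z i < x i} := by
    ext z; simp
  rw [this]
  apply isOpen_biInter_finset
  intro i _
  by_cases hiσ : i ∈ σ
  · simp only [if_pos hiσ]
    exact isOpen_lt continuous_const (EuclideanSpace.proj i).continuous
  · simp only [if_neg hiσ]
    exact isOpen_lt (EuclideanSpace.proj i).continuous continuous_const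

lemma orth_convex (x : Euc d) (ε : ℝ) (I σ : Finset (Fin d)) : Convex ℝ (orth x ε I σ) := by
  apply (convex_ball x ε).inter
  have : {z : Euc d | ∀ i ∈ I, if i ∈ σ then x i < z i else z i < x i} =
      ⋂ i ∈ I, {z : Euc d | if i ∈ σ then x i < z i else z i < x i} := by
    ext z; simp
  rw [this]
  apply convex_iInter; intro i; apply convex_iInter; intro _
  by_cases hiσ : i ∈ σ
  · simp only [if_pos hiσ]
    exact convex_halfSpace_gt (LinearMap.isLinear ((EuclideanSpace.proj i : Euc d →L[ℝ] ℝ).toLinearMap)) _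
  · simp only [if_neg hiσ]
    exact convex_halfSpace_lt (LinearMap.isLinear ((EuclideanSpace.proj i : Euc d →L[ℝ] ℝ).toLinearMap)) _

lemma wall_convex (x : Euc d) (ε : ℝ) (I : Finset (Fin d)) (a : Fin d) (σ : Finset (Fin d)) :
    Convex ℝ (wall x ε I a σ) := by
  apply (convex_ball x ε).inter
  have : {z : Euc d | z a = x a ∧ ∀ i ∈ I, i ≠ a → if i ∈ σ then x i < z i else z i < x i} =
      {z : Euc d | z a = x a} ∩ ⋂ i ∈ I, ⋂ (_ : i ≠ a), {z : Euc d | if i ∈ σ then x i < z i else z i < x i} := by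
    ext z; simp [and_assoc]
  rw [this]
  apply Convex.inter
  · exact convex_hyperplane (LinearMap.isLinear ((EuclideanSpace.proj a : Euc d →L[ℝ] ℝ).toLinearMap)) _
  · apply convex_iInter; intro i; apply convex_iInter; intro _; apply convex_iInter; intro _
    by_cases hiσ : i ∈ σ
    · simp only [if_pos hiσ]
      exact convex_halfSpace_gt (LinearMap.isLinear ((EuclideanSpace.proj i : Euc d →L[ℝ] ℝ).toLinearMap)) _
    · simp only [if_neg hiσ]
      exact convex_halfSpace_lt (LinearMap.isLinear ((EuclideanSpace.proj i : Euc d →L[ℝ] ℝ).toLinearMap)) _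

/-- the standard perturbation point used to populate orthants and walls. -/
def perturb (x : Euc d) (I σ : Finset (Fin d)) (δ : ℝ) : Euc d :=
  x + ∑ i ∈ I, EuclideanSpace.single i (if i ∈ σ then δ else -δ)

lemma perturb_coord (x : Euc d) (I σ : Finset (Fin d)) (δ : ℝ) (j : Fin d) :
    perturb x I σ δ j = x j + (if j ∈ I then (if j ∈ σ then δ else -δ) else 0) := by
  show x j + (∑ i ∈ I, EuclideanSpace.single i (if i ∈ σ then δ else -δ) : Euc d) j = _
  congr 1
  rw [sum_coord]
  rw [show (∑ i ∈ I, (EuclideanSpace.single i (if i ∈ σ then δ else -δ) : Euc d) j)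
      = ∑ i ∈ I, (if j = i then (if i ∈ σ then δ else -δ) else 0) from
    Finset.sum_congr rfl fun i _ => single_coord i j _]
  classical
  rw [Finset.sum_ite_eq I j (fun i => if i ∈ σ then δ else -δ)]

lemma perturb_dist (x : Euc d) (I σ : Finset (Fin d)) (δ : ℝ) :
    dist (perturb x I σ δ) x ≤ I.card * |δ| := by
  rw [dist_eq_norm, show perturb x I σ δ - x = ∑ i ∈ I, EuclideanSpace.single i (if i ∈ σ then δ else -δ) by
    rw [perturb]; abel]
  refine le_trans (norm_sum_le _ _) ?_
  rw [show (I.card : ℝ) * |δ| = ∑ _i ∈ I, |δ| by rw [Finset.sum_const, nsmul_eq_mul]]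
  apply Finset.sum_le_sum
  intro i _
  rw [EuclideanSpace.norm_single]
  rw [Real.norm_eq_abs]
  by_cases hi : i ∈ σ <;> simp [hi, abs_neg]

lemma perturb_mem_orth {x : Euc d} {ε δ : ℝ} {I σ : Finset (Fin d)}
    (hδ : 0 < δ) (hsmall : (I.card : ℝ) * δ < ε) :
    perturb x I σ δ ∈ orth x ε I σ := by
  constructor
  · rw [mem_ball]
    calc dist (perturb x I σ δ) x ≤ I.card * |δ| := perturb_dist x I σ δ
    _ = I.card * δ := by rw [abs_of_pos hδ]
    _ < ε := hsmall
  · intro i hi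
    have := perturb_coord x I σ δ i
    by_cases hiσ : i ∈ σ
    · rw [if_pos hiσ]
      rw [this, if_pos hi, if_pos hiσ]; linarith
    · rw [if_neg hiσ]
      rw [this, if_pos hi, if_neg hiσ]; linarith


lemma aux_mul_div_lt {c m : ℝ} (hc : 0 ≤ c) (hm : 0 < m) : c * (m / (2 * (c + 1))) < m := by
  have hD : (0:ℝ) < 2 * (c + 1) := by linarith
  rw [show c * (m / (2 * (c + 1))) = (c * m) / (2 * (c + 1)) by ring]
  rw [div_lt_iff₀ hD]
  nlinarith

lemma orth_nonempty {x : Euc d} {ε : ℝ} (hε : 0 < ε) (I σ : Finset (Fin d)) :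
    (orth x ε I σ).Nonempty := by
  exact ⟨perturb x I σ (ε / (2 * (I.card + 1))), perturb_mem_orth (by positivity)
    (aux_mul_div_lt (by positivity) hε)⟩

lemma mem_closure_orth {x : Euc d} {ε : ℝ} (hε : 0 < ε) (I σ : Finset (Fin d)) :
    x ∈ closure (orth x ε I σ) := by
  rw [Metric.mem_closure_iff]
  intro r hr
  set δ := (min ε r) / (2 * (I.card + 1)) with hδdef
  have hδ : 0 < δ := by positivity
  have hsmall : (I.card : ℝ) * δ < min ε r :=
    aux_mul_div_lt (by positivity) (lt_min_iff.2 ⟨hε, hr⟩)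
  refine ⟨perturb x I σ δ, perturb_mem_orth hδ (lt_of_lt_of_le hsmall (min_le_left _ _)), ?_⟩
  rw [dist_comm]
  calc dist (perturb x I σ δ) x ≤ I.card * |δ| := perturb_dist x I σ δ
  _ = I.card * δ := by rw [abs_of_pos hδ]
  _ < min ε r := hsmall
  _ ≤ r := min_le_right _ _

/-- points of an orthant at a `locGrid` radius avoid the grid. -/
lemma orth_offgrid {C : DiscreteCoordination S} {x : Euc d} {ε : ℝ}
    (hl : locGrid C x ε) (σ : Finset (Fin d)) {z : Euc d}
    (hz : z ∈ orth x ε (axesOf C x) σ) : z ∈ S ∧ z ∉ C.grid := by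
  refine ⟨hl.2.1 hz.1, fun hg => ?_⟩
  obtain ⟨i, hi, hzi⟩ := (hl.grid_iff hz.1).1 hg
  have := hz.2 i hi
  by_cases hiσ : i ∈ σ
  · rw [if_pos hiσ] at this; rw [hzi] at this; exact lt_irrefl _ this
  · rw [if_neg hiσ] at this; rw [hzi] at this; exact lt_irrefl _ this

/-- on a preconnected set avoiding the hyperplane `z i = c`, the side is constant. -/
lemma sign_const {W : Set (Euc d)} (hWc : IsPreconnected W) (i : Fin d) (c : ℝ)
    (hsign : ∀ w ∈ W, w i ≠ c) {w₀ z : Euc d} (hw₀ : w₀ ∈ W) (hz : z ∈ W) :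
    (c < w₀ i ↔ c < z i) := by
  set U : Set (Euc d) := {z : Euc d | c < z i} with hU
  set V : Set (Euc d) := {z : Euc d | z i < c} with hV
  have hUo : IsOpen U := isOpen_lt continuous_const (EuclideanSpace.proj i).continuous
  have hVo : IsOpen V := isOpen_lt (EuclideanSpace.proj i).continuous continuous_const
  have hdisj : Disjoint U V := by
    rw [Set.disjoint_left]
    intro a ha1 ha2
    have h1 : c < a i := ha1
    have h2 : a i < c := ha2
    exact lt_asymm h1 h2
  have hcov : W ⊆ U ∪ V := by
    intro w hw
    rcases lt_or_gt_of_ne (hsign w hw) with h1 | h1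
    · exact Or.inr h1
    · exact Or.inl h1
  constructor
  · intro h1
    have hm : w₀ ∈ U := h1
    exact hWc.subset_left_of_subset_union hUo hVo hdisj hcov ⟨w₀, hw₀, hm⟩ hz
  · intro h2
    by_contra h1
    have h1' : w₀ i < c := lt_of_le_of_ne (not_lt.1 h1) (hsign w₀ hw₀)
    have hm : w₀ ∈ V := h1'
    have hzv := hWc.subset_left_of_subset_union hVo hUo hdisj.symm
      (by rw [Set.union_comm] at hcov; exact hcov) ⟨w₀, hw₀, hm⟩ hz
    have h3 : z i < c := hzv
    exact lt_asymm h2 h3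

/-- a preconnected nonempty set inside the ball and off the grid lies in a single orthant. -/
lemma subset_orth {C : DiscreteCoordination S} {x : Euc d} {ε : ℝ}
    (hl : locGrid C x ε) {W : Set (Euc d)} (hWb : W ⊆ ball x ε)
    (hWg : ∀ w ∈ W, w ∉ C.grid) (hWc : IsPreconnected W) {w₀ : Euc d} (hw₀ : w₀ ∈ W) :
    W ⊆ orth x ε (axesOf C x) ((axesOf C x).filter (fun i => x i < w₀ i)) := by
  classical
  intro z hz
  refine ⟨hWb hz, ?_⟩
  intro i hi
  have hsign : ∀ w ∈ W, w i ≠ x i := by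
    intro w hw hwi
    exact hWg w hw ((hl.grid_iff (hWb hw)).2 ⟨i, hi, hwi⟩)
  have hconst := sign_const hWc i (x i) hsign hw₀ hz
  by_cases hmem : i ∈ (axesOf C x).filter (fun i => x i < w₀ i)
  · rw [if_pos hmem]
    exact hconst.1 (Finset.mem_filter.1 hmem).2
  · rw [if_neg hmem]
    have h1 : ¬ x i < w₀ i := fun hc => hmem (Finset.mem_filter.2 ⟨hi, hc⟩)
    have h2 : ¬ x i < z i := fun hc => h1 (hconst.2 hc)
    exact lt_of_le_of_ne (not_lt.1 h2) (hsign z hz)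

/-- two orthants sharing a point have the same sign pattern on `I`. -/
lemma orth_disjoint {x : Euc d} {ε : ℝ} {I σ σ' : Finset (Fin d)} {z : Euc d}
    (hz : z ∈ orth x ε I σ) (hz' : z ∈ orth x ε I σ') : ∀ i ∈ I, (i ∈ σ ↔ i ∈ σ') := by
  intro i hi
  have h1 := hz.2 i hi
  have h2 := hz'.2 i hi
  constructor
  · intro hσ
    rw [if_pos hσ] at h1
    by_contra hσ'
    rw [if_neg hσ'] at h2
    exact lt_asymm h1 h2
  · intro hσ'
    rw [if_pos hσ'] at h2
    by_contra hσ
    rw [if_neg hσ] at h1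
    exact lt_asymm h1 h2



-- ====================== the counting lemma ======================

/-- the number of separators through `h x` is at most the number through `x`. -/
lemma card_axes_le (hS : IsOpen S) (hS' : IsOpen S')
    (hd : IsSmoothDiffeoOn h hinv S S')
    {CA : DiscreteCoordination S} {CB : DiscreteCoordination S'}
    (hgrid : h '' CA.grid = CB.grid) {x : Euc d} (hx : x ∈ S) :
    (axesOf CB (h x)).card ≤ (axesOf CA x).card := by
  classical
  set y := h x with hy
  have hyS' : y ∈ S' := hd.mapsTo hx
  obtain ⟨ε', hε'⟩ := exists_locGrid hS' CB hyS'
  obtain ⟨ε₀, hε₀⟩ := exists_locGrid hS CA hx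
  obtain ⟨ε, hεpos, hεle, hballS, himg⟩ := diffeo_nest hd hS hx hε'.1 hε₀.1
  have hlocA : locGrid CA x ε := hε₀.mono hεle hεpos
  set IA := axesOf CA x with hIA
  set IB := axesOf CB y with hIB
  have hopen : IsOpen (h '' ball x ε) := diffeo_image_open hd hS' hballS isOpen_ball
  have hymem : y ∈ h '' ball x ε := ⟨x, mem_ball_self hεpos, rfl⟩
  -- for every sign pattern σ on IB, find a point of the ball mapping into that orthant
  have hpt : ∀ σ : Finset (Fin d), ∃ p, p ∈ ball x ε ∧ h p ∈ orth y ε' IB σ := by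
    intro σ
    have hcl := mem_closure_orth (x := y) hε'.1 IB σ
    rw [_root_.mem_closure_iff] at hcl
    obtain ⟨q, hq1, hq2⟩ := hcl (h '' ball x ε) hopen hymem
    obtain ⟨p, hp, rfl⟩ := hq1
    exact ⟨p, hp, hq2⟩
  choose p hp1 hp2 using hpt
  have hpoff : ∀ σ, p σ ∈ S ∧ p σ ∉ CA.grid := by
    intro σ
    have := orth_offgrid hε' σ (hp2 σ)
    have hpS : p σ ∈ S := hballS (hp1 σ)
    exact ⟨hpS, fun hg => this.2 ((diffeo_image_offgrid hd hgrid hpS).2 hg)⟩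
  set Φ : Finset (Fin d) → Finset (Fin d) := fun σ => IA.filter (fun i => x i < p σ i) with hΦ
  -- each p σ lies in the A-orthant with pattern Φ σ
  have hpmem : ∀ σ, p σ ∈ orth x ε IA (Φ σ) := by
    intro σ
    refine ⟨hp1 σ, ?_⟩
    intro i hi
    have hne : p σ i ≠ x i := by
      intro heq
      exact (hpoff σ).2 ((hlocA.grid_iff (hp1 σ)).2 ⟨i, hi, heq⟩)
    by_cases hmem : i ∈ Φ σ
    · rw [if_pos hmem]
      exact (Finset.mem_filter.1 hmem).2
    · rw [if_neg hmem]
      have : ¬ x i < p σ i := fun hc => hmem (Finset.mem_filter.2 ⟨hi, hc⟩)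
      exact lt_of_le_of_ne (not_lt.1 this) hne
  -- image of an A-orthant lands in a single B-orthant
  have himgorth : ∀ σ τ : Finset (Fin d), p σ ∈ orth x ε IA τ →
      h '' (orth x ε IA τ) ⊆ orth y ε' IB (IB.filter (fun i => y i < h (p σ) i)) := by
    intro σ τ hpσ
    have hOS : orth x ε IA τ ⊆ S := fun z hz => hballS hz.1
    apply subset_orth hε'
    · intro q hq
      obtain ⟨z, hz, rfl⟩ := hq
      exact himg ⟨z, hz.1, rfl⟩
    · rintro q ⟨z, hz, rfl⟩
      have := orth_offgrid hlocA τ hz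
      exact fun hg => this.2 ((diffeo_image_offgrid hd hgrid this.1).1 hg)
    · exact ((orth_convex x ε IA τ).isPreconnected).image h
        (hd.smooth.continuousOn.mono hOS)
    · exact ⟨p σ, hpσ, rfl⟩
  -- injectivity of Φ on subsets of IB
  have hinj : ∀ σ ∈ IB.powerset, ∀ σ' ∈ IB.powerset, Φ σ = Φ σ' → σ = σ' := by
    intro σ hσ σ' hσ' heq
    have hσsub : σ ⊆ IB := Finset.mem_powerset.1 hσ
    have hσ'sub : σ' ⊆ IB := Finset.mem_powerset.1 hσ'
    set τ := IB.filter (fun i => y i < h (p σ) i) with hτ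
    have h1 : h (p σ) ∈ orth y ε' IB τ :=
      himgorth σ (Φ σ) (hpmem σ) ⟨p σ, hpmem σ, rfl⟩
    have h2 : h (p σ') ∈ orth y ε' IB τ := by
      apply himgorth σ (Φ σ)
      · exact hpmem σ
      · exact ⟨p σ', by rw [heq]; exact hpmem σ', rfl⟩
    have e1 := orth_disjoint (hp2 σ) h1
    have e2 := orth_disjoint (hp2 σ') h2
    ext i
    constructor
    · intro hiσ
      have hiIB : i ∈ IB := hσsub hiσ
      exact (e2 i hiIB).2 ((e1 i hiIB).1 hiσ)
    · intro hiσ'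
      have hiIB : i ∈ IB := hσ'sub hiσ'
      exact (e1 i hiIB).2 ((e2 i hiIB).1 hiσ')
  -- conclude by counting
  have hcard : IB.powerset.card ≤ IA.powerset.card := by
    apply Finset.card_le_card_of_injOn Φ
    · intro σ hσ
      rw [Finset.mem_coe, Finset.mem_powerset]
      exact Finset.filter_subset _ _
    · intro σ hσ σ' hσ' heq
      exact hinj σ hσ σ' hσ' heq
  rw [Finset.card_powerset, Finset.card_powerset] at hcard
  exact (Nat.pow_le_pow_iff_right (by norm_num)).1 hcard

/-- the number of separators through corresponding points agree. -/
lemma card_axes_eq (hS : IsOpen S) (hS' : IsOpen S')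
    (hd : IsSmoothDiffeoOn h hinv S S')
    {CA : DiscreteCoordination S} {CB : DiscreteCoordination S'}
    (hgrid : h '' CA.grid = CB.grid) {x : Euc d} (hx : x ∈ S) :
    (axesOf CB (h x)).card = (axesOf CA x).card := by
  refine le_antisymm (card_axes_le hS hS' hd hgrid hx) ?_
  have := card_axes_le hS' hS (diffeo_symm hd) (diffeo_grid_inv hd hgrid) (hd.mapsTo hx)
  rwa [hd.left_inv x hx] at this



-- ====================== images of connected non-crossing sets ======================

/-- a preconnected subset of `S` consisting of points lying on exactly one separator maps
into a single separator of `CB`. -/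
lemma noncross_image (hS : IsOpen S) (hS' : IsOpen S')
    (hd : IsSmoothDiffeoOn h hinv S S')
    {CA : DiscreteCoordination S} {CB : DiscreteCoordination S'}
    (hgrid : h '' CA.grid = CB.grid) {W : Set (Euc d)} (hW : W ⊆ S)
    (hWc : IsPreconnected W) (hcross : ∀ w ∈ W, (axesOf CA w).card = 1)
    {w₀ : Euc d} (hw₀ : w₀ ∈ W) :
    ∃ (e : Fin d) (k : Fin (CB.n e)), ∀ w ∈ W, h w ∈ Gamma S' e (CB.A e k) := by
  classical
  have hval : ∀ w ∈ W, ∃ (e : Fin d) (θ : ℝ),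
      axesOf CB (h w) = {e} ∧ h w e = θ ∧ ∃ k, CB.A e k = θ := by
    intro w hw
    have hc : (axesOf CB (h w)).card = 1 := by
      rw [card_axes_eq hS hS' hd hgrid (hW hw)]
      exact hcross w hw
    obtain ⟨e, he⟩ := Finset.card_eq_one.1 hc
    have hemem : e ∈ axesOf CB (h w) := by rw [he]; exact Finset.mem_singleton_self e
    obtain ⟨k, hk⟩ := mem_axesOf.1 hemem
    exact ⟨e, h w e, he, rfl, k, hk.symm⟩
  choose e θ hax hthr hk using hval
  -- local constancy of the separator through the image
  have hloc : ∀ (w : Euc d) (hw : w ∈ W), ∃ δ > 0, ∀ (w2 : Euc d) (hw2 : w2 ∈ W), w2 ∈ ball w δ →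
      e w2 hw2 = e w hw ∧ θ w hw = θ w2 hw2 := by
    intro w hw
    obtain ⟨ε', hε'⟩ := exists_locGrid hS' CB (hd.mapsTo (hW hw))
    obtain ⟨δ, hδpos, _, _, himg⟩ := diffeo_nest hd hS (hW hw) hε'.1 hε'.1
    refine ⟨δ, hδpos, ?_⟩
    intro w2 hw2 hball
    have hin : h w2 ∈ ball (h w) ε' := himg ⟨w2, hball, rfl⟩
    have hgrid2 : h w2 ∈ CB.grid := by
      have h1 : w2 ∈ CA.grid := by
        rw [mem_grid_iff]
        refine ⟨hW hw2, ?_⟩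
        obtain ⟨a, ha⟩ := Finset.card_eq_one.1 (hcross w2 hw2)
        exact ⟨a, by rw [ha]; exact Finset.mem_singleton_self a⟩
      exact (diffeo_image_offgrid hd hgrid (hW hw2)).2 h1
    obtain ⟨i, hi, hival⟩ := (hε'.grid_iff hin).1 hgrid2
    have hie : i = e w hw := by
      rw [hax w hw] at hi
      exact Finset.mem_singleton.1 hi
    rw [hie] at hival
    have hval2 : (h w2) (e w hw) = θ w hw := by rw [hival]; exact hthr w hw
    obtain ⟨kw, hkw⟩ := hk w hw
    have hie2 : e w hw ∈ axesOf CB (h w2) := mem_axesOf.2 ⟨kw, by rw [hval2, hkw]⟩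
    have hee : e w hw = e w2 hw2 := by
      rw [hax w2 hw2] at hie2
      exact Finset.mem_singleton.1 hie2
    refine ⟨hee.symm, ?_⟩
    rw [← hthr w2 hw2, ← hee, hval2]
  choose δ hδpos hδ using hloc
  -- the value is globally constant by preconnectedness
  have hconst : ∀ (w : Euc d) (hw : w ∈ W), e w hw = e w₀ hw₀ ∧ θ w hw = θ w₀ hw₀ := by
    intro w1 hw1
    by_contra hne
    set U : Set (Euc d) := ⋃ (w : Euc d) (hw : w ∈ W)
      (_ : e w hw = e w₀ hw₀ ∧ θ w hw = θ w₀ hw₀), ball w (δ w hw) with hU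
    set V : Set (Euc d) := ⋃ (w : Euc d) (hw : w ∈ W)
      (_ : ¬ (e w hw = e w₀ hw₀ ∧ θ w hw = θ w₀ hw₀)), ball w (δ w hw) with hV
    have hUo : IsOpen U := isOpen_iUnion fun w => isOpen_iUnion fun _ => isOpen_iUnion fun _ => isOpen_ball
    have hVo : IsOpen V := isOpen_iUnion fun w => isOpen_iUnion fun _ => isOpen_iUnion fun _ => isOpen_ball
    have hcov : W ⊆ U ∪ V := by
      intro w hw
      by_cases hc : e w hw = e w₀ hw₀ ∧ θ w hw = θ w₀ hw₀
      · exact Or.inl (mem_iUnion.2 ⟨w, mem_iUnion.2 ⟨hw, mem_iUnion.2 ⟨hc, mem_ball_self (hδpos w hw)⟩⟩⟩)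
      · exact Or.inr (mem_iUnion.2 ⟨w, mem_iUnion.2 ⟨hw, mem_iUnion.2 ⟨hc, mem_ball_self (hδpos w hw)⟩⟩⟩)
    have hWU : (W ∩ U).Nonempty :=
      ⟨w₀, hw₀, mem_iUnion.2 ⟨w₀, mem_iUnion.2 ⟨hw₀, mem_iUnion.2 ⟨⟨rfl, rfl⟩, mem_ball_self (hδpos w₀ hw₀)⟩⟩⟩⟩
    have hWV : (W ∩ V).Nonempty :=
      ⟨w1, hw1, mem_iUnion.2 ⟨w1, mem_iUnion.2 ⟨hw1, mem_iUnion.2 ⟨hne, mem_ball_self (hδpos w1 hw1)⟩⟩⟩⟩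
    obtain ⟨z, hzW, hzU, hzV⟩ := hWc U V hUo hVo hcov hWU hWV
    obtain ⟨wa, hha⟩ := mem_iUnion.1 hzU
    obtain ⟨hwaW, hha2⟩ := mem_iUnion.1 hha
    obtain ⟨hca, hball_a⟩ := mem_iUnion.1 hha2
    obtain ⟨wb, hhb⟩ := mem_iUnion.1 hzV
    obtain ⟨hwbW, hhb2⟩ := mem_iUnion.1 hhb
    obtain ⟨hcb, hball_b⟩ := mem_iUnion.1 hhb2
    have ha := hδ wa hwaW z hzW hball_a
    have hb := hδ wb hwbW z hzW hball_b
    apply hcb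
    constructor
    · rw [← hca.1, ← ha.1, hb.1]
    · rw [← hca.2, ha.2, ← hb.2]
  obtain ⟨k₀, hk₀⟩ := hk w₀ hw₀
  refine ⟨e w₀ hw₀, k₀, ?_⟩
  intro w hw
  refine ⟨hd.mapsTo (hW hw), ?_⟩
  rw [hk₀, ← (hconst w hw).2, ← (hconst w hw).1]
  exact hthr w hw


-- ====================== wall auxiliary lemmas ======================

lemma orth_mono {x : Euc d} {ε ε' : ℝ} (hle : ε' ≤ ε) (I σ : Finset (Fin d)) :
    orth x ε' I σ ⊆ orth x ε I σ := fun z hz =>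
  ⟨Metric.mem_ball.2 (lt_of_lt_of_le (Metric.mem_ball.1 hz.1) hle), hz.2⟩

lemma wall_mono {x : Euc d} {ε ε' : ℝ} (hle : ε' ≤ ε) (I : Finset (Fin d)) (a : Fin d)
    (σ : Finset (Fin d)) : wall x ε' I a σ ⊆ wall x ε I a σ := fun z hz =>
  ⟨Metric.mem_ball.2 (lt_of_lt_of_le (Metric.mem_ball.1 hz.1) hle), hz.2⟩

/-- nonemptiness of walls, and the center in their closure. -/
lemma wall_nonempty_closure {x : Euc d} {ε : ℝ} (hε : 0 < ε) (I : Finset (Fin d))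
    (a : Fin d) (σ : Finset (Fin d)) :
    (wall x ε I a σ).Nonempty ∧ x ∈ closure (wall x ε I a σ) := by
  classical
  set J := I.erase a with hJ
  have key : ∀ δ : ℝ, 0 < δ → (J.card : ℝ) * δ < ε → perturb x J σ δ ∈ wall x ε I a σ := by
    intro δ hδ hsmall
    have hball : perturb x J σ δ ∈ ball x ε := by
      rw [mem_ball]
      calc dist (perturb x J σ δ) x ≤ J.card * |δ| := perturb_dist x J σ δ
      _ = J.card * δ := by rw [abs_of_pos hδ]
      _ < ε := hsmall
    refine ⟨hball, ?_, ?_⟩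
    · rw [perturb_coord, if_neg (fun hc => (Finset.mem_erase.1 hc).1 rfl), add_zero]
    · intro i hi hia
      have hiJ : i ∈ J := Finset.mem_erase.2 ⟨hia, hi⟩
      rw [perturb_coord, if_pos hiJ]
      by_cases hiσ : i ∈ σ
      · rw [if_pos hiσ, if_pos hiσ]; linarith
      · rw [if_neg hiσ, if_neg hiσ]; linarith
  constructor
  · exact ⟨perturb x J σ (ε / (2 * (J.card + 1))),
      key _ (by positivity) (aux_mul_div_lt (by positivity) hε)⟩
  · rw [Metric.mem_closure_iff]
    intro r hr
    set δ := (min ε r) / (2 * (J.card + 1)) with hδdef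
    have hδ : 0 < δ := by positivity
    have hsmall : (J.card : ℝ) * δ < min ε r := aux_mul_div_lt (by positivity) (lt_min_iff.2 ⟨hε, hr⟩)
    refine ⟨perturb x J σ δ, key _ hδ (lt_of_lt_of_le hsmall (min_le_left _ _)), ?_⟩
    rw [dist_comm]
    calc dist (perturb x J σ δ) x ≤ J.card * |δ| := perturb_dist x J σ δ
    _ = J.card * δ := by rw [abs_of_pos hδ]
    _ < min ε r := hsmall
    _ ≤ r := min_le_right _ _

/-- every point of a wall lies on exactly the separator of its wall axis. -/
lemma wall_noncross {C : DiscreteCoordination S} {x : Euc d} {ε : ℝ}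
    (hl : locGrid C x ε) {a : Fin d} (ha : a ∈ axesOf C x) (σ : Finset (Fin d)) {w : Euc d}
    (hw : w ∈ wall x ε (axesOf C x) a σ) : axesOf C w = {a} := by
  obtain ⟨hball, hwa, hsgn⟩ := hw
  apply Finset.ext
  intro i
  simp only [Finset.mem_singleton]
  constructor
  · intro hi
    obtain ⟨heq, hmem⟩ := hl.coord_eq hball hi
    by_contra hia
    have := hsgn i hmem hia
    by_cases hiσ : i ∈ σ
    · rw [if_pos hiσ] at this; rw [heq] at this; exact lt_irrefl _ this
    · rw [if_neg hiσ] at this; rw [heq] at this; exact lt_irrefl _ this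
  · rintro rfl
    obtain ⟨k, hk⟩ := mem_axesOf.1 ha
    exact mem_axesOf.2 ⟨k, by rw [hwa, hk]⟩



-- ====================== image of an orthant lies in an orthant ======================

lemma orth_image (hS : IsOpen S) (hS' : IsOpen S') (hd : IsSmoothDiffeoOn h hinv S S')
    {CA : DiscreteCoordination S} {CB : DiscreteCoordination S'}
    (hgrid : h '' CA.grid = CB.grid) {x : Euc d} (hx : x ∈ S) {ε ε' : ℝ}
    (hlA : locGrid CA x ε) (hlB : locGrid CB (h x) ε')
    (himg : h '' ball x ε ⊆ ball (h x) ε') (σ : Finset (Fin d)) :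
    ∃ τ, τ ⊆ axesOf CB (h x) ∧
      h '' (orth x ε (axesOf CA x) σ) ⊆ orth (h x) ε' (axesOf CB (h x)) τ := by
  classical
  obtain ⟨p₀, hp₀⟩ := orth_nonempty hlA.1 (axesOf CA x) σ
  refine ⟨(axesOf CB (h x)).filter (fun i => (h x) i < h p₀ i), Finset.filter_subset _ _, ?_⟩
  apply subset_orth hlB
  · rintro q ⟨z, hz, rfl⟩
    exact himg ⟨z, hz.1, rfl⟩
  · rintro q ⟨z, hz, rfl⟩
    have := orth_offgrid hlA σ hz
    exact fun hg => this.2 ((diffeo_image_offgrid hd hgrid this.1).1 hg)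
  · exact ((orth_convex x ε (axesOf CA x) σ).isPreconnected).image h
      (hd.smooth.continuousOn.mono (fun z hz => hlA.2.1 hz.1))
  · exact ⟨p₀, hp₀, rfl⟩

-- ====================== the two sides match up ======================

/-- at a non-crossing point `w` (axis `a`), with image non-crossing on axis `e`, the two
sides of the image hyperplane lie in the images of the two sides of the source hyperplane. -/
lemma side_match (hS : IsOpen S) (hS' : IsOpen S') (hd : IsSmoothDiffeoOn h hinv S S')
    {CA : DiscreteCoordination S} {CB : DiscreteCoordination S'}
    (hgrid : h '' CA.grid = CB.grid) {w : Euc d} (hwS : w ∈ S) {a : Fin d}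
    (haxw : axesOf CA w = {a}) {e : Fin d} (haxw' : axesOf CB (h w) = {e})
    {ρ ρ' : ℝ} (hρ : locGrid CA w ρ) (hρ' : locGrid CB (h w) ρ')
    (hsub : ball (h w) ρ' ⊆ h '' (ball w ρ)) :
    (orth (h w) ρ' {e} {e} ⊆ h '' (orth w ρ {a} {a}) ∧ orth (h w) ρ' {e} ∅ ⊆ h '' (orth w ρ {a} ∅))
    ∨ (orth (h w) ρ' {e} {e} ⊆ h '' (orth w ρ {a} ∅) ∧ orth (h w) ρ' {e} ∅ ⊆ h '' (orth w ρ {a} {a})) := by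
  classical
  have hballS : ball w ρ ⊆ S := hρ.2.1
  -- rewrite the orthants as axes-orthants
  have hEeq : ∀ σ : Finset (Fin d), orth w ρ {a} σ = orth w ρ (axesOf CA w) σ := by
    intro σ; rw [haxw]
  have hFeq : ∀ τ : Finset (Fin d), orth (h w) ρ' {e} τ = orth (h w) ρ' (axesOf CB (h w)) τ := by
    intro τ; rw [haxw']
  -- each image side is open and off the B-grid
  have hEopen : ∀ σ, IsOpen (h '' (orth w ρ {a} σ)) := fun σ =>
    diffeo_image_open hd hS' (fun z hz => hballS hz.1) (orth_open _ _ _ _)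
  have hEoff : ∀ σ (q : Euc d), q ∈ h '' (orth w ρ {a} σ) → q ∈ S' ∧ q ∉ CB.grid := by
    rintro σ q ⟨z, hz, rfl⟩
    rw [hEeq] at hz
    have := orth_offgrid hρ σ hz
    exact ⟨hd.mapsTo this.1, fun hg => this.2 ((diffeo_image_offgrid hd hgrid this.1).1 hg)⟩
  have hdisj : Disjoint (h '' (orth w ρ {a} {a})) (h '' (orth w ρ {a} ∅)) := by
    rw [Set.disjoint_left]
    rintro q ⟨z, hz, rfl⟩ ⟨z', hz', heq⟩
    have hzz : z' = z := diffeo_injOn hd (hballS hz'.1) (hballS hz.1) heq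
    subst hzz
    have h1 := hz.2 a (by rw [haxw] at *; exact Finset.mem_singleton_self a)
    have h2 := hz'.2 a (Finset.mem_singleton_self a)
    rw [if_pos (Finset.mem_singleton_self a)] at h1
    rw [if_neg (Finset.notMem_empty a)] at h2
    exact lt_asymm h1 h2
  -- a side of the image hyperplane is contained in the union of the two images
  have hcover : ∀ τ : Finset (Fin d), orth (h w) ρ' {e} τ ⊆
      h '' (orth w ρ {a} {a}) ∪ h '' (orth w ρ {a} ∅) := by
    intro τ q hq
    have hq' : q ∈ ball (h w) ρ' := hq.1
    obtain ⟨z, hz, rfl⟩ := hsub hq'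
    have hzgrid : z ∉ CA.grid := by
      rw [hFeq] at hq
      have := orth_offgrid hρ' τ hq
      exact fun hg => this.2 ((diffeo_image_offgrid hd hgrid (hballS hz)).2 hg)
    have hza : z a ≠ w a := by
      intro heq
      exact hzgrid ((hρ.grid_iff hz).2 ⟨a, by rw [haxw]; exact Finset.mem_singleton_self a, heq⟩)
    rcases lt_or_gt_of_ne hza with h1 | h1
    · right
      refine ⟨z, ⟨hz, ?_⟩, rfl⟩
      intro i hi
      rw [Finset.mem_singleton] at hi
      subst hi
      rw [if_neg (Finset.notMem_empty i)]
      exact h1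
    · left
      refine ⟨z, ⟨hz, ?_⟩, rfl⟩
      intro i hi
      rw [Finset.mem_singleton] at hi
      subst hi
      rw [if_pos (Finset.mem_singleton_self i)]
      exact h1
  -- each side of the image hyperplane lies in one of the two images
  have hside : ∀ τ : Finset (Fin d), orth (h w) ρ' {e} τ ⊆ h '' (orth w ρ {a} {a}) ∨
      orth (h w) ρ' {e} τ ⊆ h '' (orth w ρ {a} ∅) :=
    fun τ => (orth_convex (h w) ρ' {e} τ).isPreconnected.subset_or_subset
      (hEopen {a}) (hEopen ∅) hdisj (hcover τ)
  -- the two sides cannot live in the same image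
  have hnotsame : ∀ σ : Finset (Fin d),
      ¬ (orth (h w) ρ' {e} {e} ⊆ h '' (orth w ρ {a} σ) ∧
         orth (h w) ρ' {e} ∅ ⊆ h '' (orth w ρ {a} σ)) := by
    rintro σ ⟨hp, hm⟩
    -- the other side's image has points near h w, but they have nowhere to be
    set σc : Finset (Fin d) := if a ∈ σ then ∅ else {a} with hσc
    have hio : h w ∈ closure (h '' (orth w ρ {a} σc)) := by
      have h1 : w ∈ closure (orth w ρ {a} σc) := mem_closure_orth hρ.1 {a} σc
      exact mem_closure_image (diffeo_contAt hd hS hwS) h1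
    obtain ⟨q, hq1, hq2⟩ := (_root_.mem_closure_iff).1 hio (ball (h w) ρ') isOpen_ball
      (mem_ball_self hρ'.1)
    -- q is in the ball and off the B-grid, hence on one of the two sides F±
    have hqoff : q ∈ S' ∧ q ∉ CB.grid := hEoff σc q hq2
    have hqe : q e ≠ (h w) e := by
      intro heq
      exact hqoff.2 ((hρ'.grid_iff hq1).2 ⟨e, by rw [haxw']; exact Finset.mem_singleton_self e, heq⟩)
    have hqmem : q ∈ h '' (orth w ρ {a} σ) := by
      rcases lt_or_gt_of_ne hqe with h1 | h1
      · apply hm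
        refine ⟨hq1, ?_⟩
        intro i hi
        rw [Finset.mem_singleton] at hi; subst hi
        rw [if_neg (Finset.notMem_empty i)]; exact h1
      · apply hp
        refine ⟨hq1, ?_⟩
        intro i hi
        rw [Finset.mem_singleton] at hi; subst hi
        rw [if_pos (Finset.mem_singleton_self i)]; exact h1
    -- but q is also in the image of the opposite side: contradiction
    obtain ⟨z, hz, rfl⟩ := hqmem
    obtain ⟨z', hz', heq⟩ := hq2
    have hzz : z' = z := diffeo_injOn hd (hballS hz'.1) (hballS hz.1) heq
    subst hzz
    have h1 := hz.2 a (Finset.mem_singleton_self a)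
    have h2 := hz'.2 a (Finset.mem_singleton_self a)
    by_cases haσ : a ∈ σ
    · rw [if_pos haσ] at h1
      have : a ∉ σc := by rw [hσc, if_pos haσ]; exact Finset.notMem_empty a
      rw [if_neg this] at h2
      exact lt_asymm h1 h2
    · rw [if_neg haσ] at h1
      have : a ∈ σc := by rw [hσc, if_neg haσ]; exact Finset.mem_singleton_self a
      rw [if_pos this] at h2
      exact lt_asymm h2 h1
  rcases hside {e} with h1 | h1 <;> rcases hside ∅ with h2 | h2
  · exact absurd ⟨h1, h2⟩ (hnotsame {a})
  · exact Or.inl ⟨h1, h2⟩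
  · exact Or.inr ⟨h1, h2⟩
  · exact absurd ⟨h1, h2⟩ (hnotsame ∅)



-- ====================== the wall step: crossing a wall flips exactly one sign ======================

lemma exists_pos_min (t : Finset ℝ) (ht : ∀ r ∈ t, 0 < r) {c : ℝ} (hc : 0 < c) :
    ∃ ρ, 0 < ρ ∧ ρ ≤ c ∧ ∀ r ∈ t, ρ ≤ r := by
  classical
  set T : Finset ℝ := insert c t with hT
  have hTne : T.Nonempty := ⟨c, Finset.mem_insert_self _ _⟩
  refine ⟨T.min' hTne, ?_, Finset.min'_le _ _ (Finset.mem_insert_self _ _),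
    fun r hr => Finset.min'_le _ _ (Finset.mem_insert.2 (Or.inr hr))⟩
  rcases Finset.mem_insert.1 (T.min'_mem hTne) with h1 | h1
  · show (0:ℝ) < T.min' hTne; rw [h1]; exact hc
  · show (0:ℝ) < T.min' hTne; exact ht _ h1

lemma side_stable {c w z : ℝ} (hne : |z - w| < |w - c|) :
    (c < w → c < z) ∧ (w < c → z < c) := by
  rw [abs_lt] at hne
  constructor
  · intro hcw
    have : |w - c| = w - c := abs_of_pos (by linarith)
    rw [this] at hne
    linarith [hne.1]
  · intro hwc
    have : |w - c| = -(w - c) := abs_of_neg (by linarith)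
    rw [this] at hne
    linarith [hne.2]

lemma wall_step (hS : IsOpen S) (hS' : IsOpen S') (hd : IsSmoothDiffeoOn h hinv S S')
    {CA : DiscreteCoordination S} {CB : DiscreteCoordination S'}
    (hgrid : h '' CA.grid = CB.grid) {v : Euc d} (hvS : v ∈ S) {εv ε1' : ℝ}
    (hlA : locGrid CA v εv) (hlB : locGrid CB (h v) ε1')
    (himgball : h '' ball v εv ⊆ ball (h v) ε1')
    (q : Finset (Fin d) → Finset (Fin d))
    (hq : ∀ σ, h '' (orth v εv (axesOf CA v) σ) ⊆ orth (h v) ε1' (axesOf CB (h v)) (q σ))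
    {a : Fin d} (ha : a ∈ axesOf CA v) {σ : Finset (Fin d)} (hσa : a ∉ σ)
    {e₁ : Fin d} {θ₁ : ℝ} (hk₁ : ∃ k, CB.A e₁ k = θ₁)
    (hwimg : ∀ z ∈ wall v εv (axesOf CA v) a σ, (h z) e₁ = θ₁) :
    (h v) e₁ = θ₁ ∧ e₁ ∈ axesOf CB (h v) ∧
    ((e₁ ∈ q (insert a σ)) ↔ (e₁ ∉ q σ)) ∧
    ∀ f ∈ axesOf CB (h v), f ≠ e₁ → ((f ∈ q (insert a σ)) ↔ (f ∈ q σ)) := by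
  classical
  set IA := axesOf CA v with hIA
  set v' := h v with hv'
  set IB := axesOf CB v' with hIB
  obtain ⟨hwne, hwcl⟩ := wall_nonempty_closure hlA.1 IA a σ
  -- the image of the center is on the hyperplane e₁ = θ₁
  have hθv : v' e₁ = θ₁ := by
    have hcl : v' ∈ closure (h '' wall v εv IA a σ) :=
      mem_closure_image (diffeo_contAt hd hS hvS) hwcl
    have hsub : h '' wall v εv IA a σ ⊆ {y : Euc d | y e₁ = θ₁} := by
      rintro y ⟨z, hz, rfl⟩
      exact hwimg z hz
    have hclosed : IsClosed {y : Euc d | y e₁ = θ₁} :=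
      isClosed_eq (EuclideanSpace.proj e₁).continuous continuous_const
    exact (closure_minimal hsub hclosed) hcl
  have he₁IB : e₁ ∈ IB := by
    obtain ⟨k₁, hk₁'⟩ := hk₁
    exact mem_axesOf.2 ⟨k₁, by rw [hθv, hk₁']⟩
  refine ⟨hθv, he₁IB, ?_⟩
  -- pick a wall point
  obtain ⟨w, hw⟩ := hwne
  have hwball : w ∈ ball v εv := hw.1
  have hwa : w a = v a := hw.2.1
  have hwS : w ∈ S := hlA.2.1 hwball
  have haxw : axesOf CA w = {a} := wall_noncross hlA ha σ hw
  have hw'e₁ : (h w) e₁ = θ₁ := hwimg w hw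
  have hw'B1 : h w ∈ ball v' ε1' := himgball ⟨w, hwball, rfl⟩
  have hw'S' : h w ∈ S' := hd.mapsTo hwS
  -- the image of the wall point is noncrossing with axis e₁
  have haxw' : axesOf CB (h w) = {e₁} := by
    have hc : (axesOf CB (h w)).card = 1 := by
      rw [card_axes_eq hS hS' hd hgrid hwS, haxw, Finset.card_singleton]
    obtain ⟨f, hf⟩ := Finset.card_eq_one.1 hc
    have : e₁ ∈ axesOf CB (h w) := by
      obtain ⟨k₁, hk₁'⟩ := hk₁
      exact mem_axesOf.2 ⟨k₁, by rw [hw'e₁, hk₁']⟩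
    rw [hf] at this ⊢
    rw [Finset.mem_singleton.1 this]
  -- radius ρ at w
  obtain ⟨ρ₀, hρ₀⟩ := exists_locGrid hS CA hwS
  have hgap : ∀ i ∈ IA.erase a, 0 < |w i - v i| := by
    intro i hi
    obtain ⟨hia, hiIA⟩ := Finset.mem_erase.1 hi
    have := hw.2.2 i hiIA hia
    by_cases hiσ : i ∈ σ
    · rw [if_pos hiσ] at this; rw [abs_pos]; intro hc; rw [sub_eq_zero] at hc; rw [hc] at this; exact lt_irrefl _ this
    · rw [if_neg hiσ] at this; rw [abs_pos]; intro hc; rw [sub_eq_zero] at hc; rw [hc] at this; exact lt_irrefl _ this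
  obtain ⟨ρ, hρpos, hρle, hρgap⟩ := exists_pos_min
    ((IA.erase a).image (fun i => |w i - v i|))
    (by
      intro r hr
      obtain ⟨i, hi, rfl⟩ := Finset.mem_image.1 hr
      exact hgap i hi)
    (show (0:ℝ) < min ρ₀ (εv - dist w v) by
      refine lt_min hρ₀.1 ?_
      have := mem_ball.1 hwball
      linarith)
  have hρρ₀ : ρ ≤ ρ₀ := le_trans hρle (min_le_left _ _)
  have hρball : ball w ρ ⊆ ball v εv := by
    intro z hz
    rw [mem_ball] at *
    have h1 : dist z v ≤ dist z w + dist w v := dist_triangle z w v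
    have h2 : ρ ≤ εv - dist w v := le_trans hρle (min_le_right _ _)
    linarith [mem_ball.1 hz]
  have hlw : locGrid CA w ρ := hρ₀.mono hρρ₀ hρpos
  -- the two sides at w land in the adjacent orthants at v
  have hkeep : ∀ z ∈ ball w ρ, ∀ i ∈ IA, i ≠ a → (if i ∈ σ then v i < z i else z i < v i) := by
    intro z hz i hiIA hia
    have hρg : ρ ≤ |w i - v i| := hρgap _ (Finset.mem_image.2 ⟨i, Finset.mem_erase.2 ⟨hia, hiIA⟩, rfl⟩)
    have hst := side_stable (c := v i) (w := w i) (z := z i)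
      (lt_of_le_of_lt (coord_abs_le_dist z w i) (lt_of_lt_of_le (mem_ball.1 hz) hρg))
    have hsgn := hw.2.2 i hiIA hia
    by_cases hiσ : i ∈ σ
    · rw [if_pos hiσ] at hsgn ⊢
      exact hst.1 hsgn
    · rw [if_neg hiσ] at hsgn ⊢
      exact hst.2 hsgn
  have hEp : orth w ρ {a} {a} ⊆ orth v εv IA (insert a σ) := by
    intro z hz
    refine ⟨hρball hz.1, ?_⟩
    intro i hiIA
    by_cases hia : i = a
    · subst hia
      rw [if_pos (Finset.mem_insert_self i σ)]
      have := hz.2 i (Finset.mem_singleton_self i)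
      rw [if_pos (Finset.mem_singleton_self i)] at this
      rw [← hwa]
      exact this
    · have := hkeep z hz.1 i hiIA hia
      by_cases hiσ : i ∈ σ
      · rw [if_pos hiσ] at this
        rw [if_pos (Finset.mem_insert_of_mem hiσ)]
        exact this
      · rw [if_neg hiσ] at this
        rw [if_neg (fun hc => by rcases Finset.mem_insert.1 hc with h1 | h1; exact hia h1; exact hiσ h1)]
        exact this
  have hEm : orth w ρ {a} ∅ ⊆ orth v εv IA σ := by
    intro z hz
    refine ⟨hρball hz.1, ?_⟩
    intro i hiIA
    by_cases hia : i = a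
    · subst hia
      rw [if_neg hσa]
      have := hz.2 i (Finset.mem_singleton_self i)
      rw [if_neg (Finset.notMem_empty i)] at this
      rw [← hwa]
      exact this
    · exact hkeep z hz.1 i hiIA hia
  -- radius ρ' at h w
  obtain ⟨ρ'₀, hρ'₀⟩ := exists_locGrid hS' CB hw'S'
  have hop : IsOpen (h '' ball w ρ) := diffeo_image_open hd hS' hlw.2.1 isOpen_ball
  obtain ⟨r₁, hr₁pos, hr₁sub⟩ := Metric.isOpen_iff.1 hop (h w) ⟨w, mem_ball_self hρpos, rfl⟩
  have hgap' : ∀ f ∈ IB.erase e₁, 0 < |(h w) f - v' f| := by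
    intro f hf
    obtain ⟨hfe, hfIB⟩ := Finset.mem_erase.1 hf
    rw [abs_pos, sub_ne_zero]
    intro hc
    obtain ⟨kf, hkf⟩ := mem_axesOf.1 hfIB
    have : f ∈ axesOf CB (h w) := mem_axesOf.2 ⟨kf, by rw [hc, hkf]⟩
    rw [haxw', Finset.mem_singleton] at this
    exact hfe this
  obtain ⟨ρ', hρ'pos, hρ'le, hρ'gap⟩ := exists_pos_min
    ((IB.erase e₁).image (fun f => |(h w) f - v' f|))
    (by
      intro r hr
      obtain ⟨f, hf, rfl⟩ := Finset.mem_image.1 hr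
      exact hgap' f hf)
    (show (0:ℝ) < min (min ρ'₀ r₁) (ε1' - dist (h w) v') by
      refine lt_min (lt_min hρ'₀.1 hr₁pos) ?_
      have := mem_ball.1 hw'B1
      linarith)
  have hlw' : locGrid CB (h w) ρ' :=
    hρ'₀.mono (le_trans hρ'le (le_trans (min_le_left _ _) (min_le_left _ _))) hρ'pos
  have hρ'sub : ball (h w) ρ' ⊆ h '' ball w ρ := by
    intro z hz
    apply hr₁sub
    rw [mem_ball] at *
    exact lt_of_lt_of_le hz (le_trans hρ'le (le_trans (min_le_left _ _) (min_le_right _ _)))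
  have hρ'B1 : ball (h w) ρ' ⊆ ball v' ε1' := by
    intro z hz
    rw [mem_ball] at *
    have h1 : dist z v' ≤ dist z (h w) + dist (h w) v' := dist_triangle _ _ _
    have h2 : ρ' ≤ ε1' - dist (h w) v' := le_trans hρ'le (min_le_right _ _)
    linarith
  set τ₀ : Finset (Fin d) := (IB.erase e₁).filter (fun f => v' f < (h w) f) with hτ₀
  have he₁τ₀ : e₁ ∉ τ₀ := by
    intro hc
    exact (Finset.mem_erase.1 (Finset.mem_filter.1 hc).1).1 rfl
  have hkeep' : ∀ z ∈ ball (h w) ρ', ∀ f ∈ IB, f ≠ e₁ →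
      (if f ∈ τ₀ then v' f < z f else z f < v' f) := by
    intro z hz f hfIB hfe
    have hρg : ρ' ≤ |(h w) f - v' f| :=
      hρ'gap _ (Finset.mem_image.2 ⟨f, Finset.mem_erase.2 ⟨hfe, hfIB⟩, rfl⟩)
    have hst := side_stable (c := v' f) (w := (h w) f) (z := z f)
      (lt_of_le_of_lt (coord_abs_le_dist z (h w) f) (lt_of_lt_of_le (mem_ball.1 hz) hρg))
    by_cases hfτ : f ∈ τ₀
    · rw [if_pos hfτ]
      exact hst.1 (Finset.mem_filter.1 hfτ).2
    · rw [if_neg hfτ]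
      have hns : ¬ v' f < (h w) f := fun hc =>
        hfτ (Finset.mem_filter.2 ⟨Finset.mem_erase.2 ⟨hfe, hfIB⟩, hc⟩)
      have hlt : (h w) f < v' f :=
        lt_of_le_of_ne (not_lt.1 hns) (fun hc => by
          have := hgap' f (Finset.mem_erase.2 ⟨hfe, hfIB⟩)
          rw [hc, sub_self, abs_zero] at this
          exact lt_irrefl _ this)
      exact hst.2 hlt
  have hFp : orth (h w) ρ' {e₁} {e₁} ⊆ orth v' ε1' IB (insert e₁ τ₀) := by
    intro z hz
    refine ⟨hρ'B1 hz.1, ?_⟩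
    intro f hfIB
    by_cases hfe : f = e₁
    · subst hfe
      rw [if_pos (Finset.mem_insert_self f τ₀)]
      have := hz.2 f (Finset.mem_singleton_self f)
      rw [if_pos (Finset.mem_singleton_self f)] at this
      rw [hθv, ← hw'e₁]
      exact this
    · have := hkeep' z hz.1 f hfIB hfe
      by_cases hfτ : f ∈ τ₀
      · rw [if_pos hfτ] at this
        rw [if_pos (Finset.mem_insert_of_mem hfτ)]
        exact this
      · rw [if_neg hfτ] at this
        rw [if_neg (fun hc => by rcases Finset.mem_insert.1 hc with h1 | h1; exact hfe h1; exact hfτ h1)]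
        exact this
  have hFm : orth (h w) ρ' {e₁} ∅ ⊆ orth v' ε1' IB τ₀ := by
    intro z hz
    refine ⟨hρ'B1 hz.1, ?_⟩
    intro f hfIB
    by_cases hfe : f = e₁
    · subst hfe
      rw [if_neg he₁τ₀]
      have := hz.2 f (Finset.mem_singleton_self f)
      rw [if_neg (Finset.notMem_empty f)] at this
      rw [hθv, ← hw'e₁]
      exact this
    · exact hkeep' z hz.1 f hfIB hfe
  -- apply the side-matching lemma
  have hsm := side_match hS hS' hd hgrid hwS haxw haxw' hlw hlw' hρ'sub
  obtain ⟨yp, hyp⟩ := orth_nonempty hρ'pos ({e₁} : Finset (Fin d)) ({e₁} : Finset (Fin d))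
  obtain ⟨ym, hym⟩ := orth_nonempty hρ'pos ({e₁} : Finset (Fin d)) (∅ : Finset (Fin d))
  have hypτ : yp ∈ orth v' ε1' IB (insert e₁ τ₀) := hFp hyp
  have hymτ : ym ∈ orth v' ε1' IB τ₀ := hFm hym
  rcases hsm with ⟨hc1, hc2⟩ | ⟨hc1, hc2⟩
  · -- positive side to positive side
    have hypq : yp ∈ orth v' ε1' IB (q (insert a σ)) :=
      hq (insert a σ) (Set.image_mono hEp (hc1 hyp))
    have hymq : ym ∈ orth v' ε1' IB (q σ) :=
      hq σ (Set.image_mono hEm (hc2 hym))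
    have e1 := orth_disjoint hypq hypτ
    have e2 := orth_disjoint hymq hymτ
    constructor
    · constructor
      · intro _
        intro hc
        exact he₁τ₀ ((e2 e₁ he₁IB).1 hc)
      · intro _
        exact (e1 e₁ he₁IB).2 (Finset.mem_insert_self _ _)
    · intro f hfIB hfe
      constructor
      · intro hc
        have := (e1 f hfIB).2.mt
        have h1 : f ∈ insert e₁ τ₀ := (e1 f hfIB).1 hc
        have h2 : f ∈ τ₀ := by
          rcases Finset.mem_insert.1 h1 with h3 | h3
          · exact absurd h3 hfe
          · exact h3
        exact (e2 f hfIB).2 h2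
      · intro hc
        have h2 : f ∈ τ₀ := (e2 f hfIB).1 hc
        exact (e1 f hfIB).2 (Finset.mem_insert_of_mem h2)
  · -- positive side to negative side
    have hypq : yp ∈ orth v' ε1' IB (q σ) :=
      hq σ (Set.image_mono hEm (hc1 hyp))
    have hymq : ym ∈ orth v' ε1' IB (q (insert a σ)) :=
      hq (insert a σ) (Set.image_mono hEp (hc2 hym))
    have e1 := orth_disjoint hypq hypτ
    have e2 := orth_disjoint hymq hymτ
    constructor
    · constructor
      · intro hc
        exfalso
        exact he₁τ₀ ((e2 e₁ he₁IB).1 hc)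
      · intro hc
        exfalso
        exact hc ((e1 e₁ he₁IB).2 (Finset.mem_insert_self _ _))
    · intro f hfIB hfe
      constructor
      · intro hc
        have h1 : f ∈ τ₀ := (e2 f hfIB).1 hc
        exact (e1 f hfIB).2 (Finset.mem_insert_of_mem h1)
      · intro hc
        have h3 := (e1 f hfIB).1 hc
        have h2 : f ∈ τ₀ := by
          rcases Finset.mem_insert.1 h3 with h4 | h4
          · exact absurd h4 hfe
          · exact h4
        exact (e2 f hfIB).2 h2


-- ====================== no bending at codimension-2 points ======================

lemma subset_pair {α : Type*} [DecidableEq α] {a b : α} {σ : Finset α} (hs : σ ⊆ {a, b}) :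
    σ = ∅ ∨ σ = {a} ∨ σ = {b} ∨ σ = {a, b} := by
  by_cases haσ : a ∈ σ <;> by_cases hbσ : b ∈ σ
  · right; right; right
    apply Finset.Subset.antisymm hs
    intro i hi
    rcases Finset.mem_insert.1 hi with rfl | hi
    · exact haσ
    · rw [Finset.mem_singleton.1 hi]; exact hbσ
  · right; left
    apply Finset.Subset.antisymm
    · intro i hi
      rcases Finset.mem_insert.1 (hs hi) with rfl | h2
      · exact Finset.mem_singleton_self i
      · rw [Finset.mem_singleton.1 h2] at hi; exact absurd hi hbσ
    · intro i hi
      rw [Finset.mem_singleton.1 hi]; exact haσ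
  · right; right; left
    apply Finset.Subset.antisymm
    · intro i hi
      rcases Finset.mem_insert.1 (hs hi) with rfl | h2
      · exact absurd hi haσ
      · exact h2
    · intro i hi
      rw [Finset.mem_singleton.1 hi]; exact hbσ
  · left
    rw [Finset.eq_empty_iff_forall_notMem]
    intro i hi
    rcases Finset.mem_insert.1 (hs hi) with rfl | h2
    · exact haσ hi
    · rw [Finset.mem_singleton.1 h2] at hi; exact hbσ hi

lemma bool_c4 : ∀ p00 p10 p01 p11 : Bool × Bool,
    p11.1 = !p01.1 → p11.2 = p01.2 →
    p10.2 = !p00.2 → p10.1 = p00.1 →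
    ((p11.1 = !p10.1 ∧ p11.2 = p10.2) ∨ (p11.2 = !p10.2 ∧ p11.1 = p10.1)) →
    ¬ (∀ t : Bool × Bool, t = p00 ∨ t = p10 ∨ t = p01 ∨ t = p11) := by decide

lemma no_bend (hS : IsOpen S) (hS' : IsOpen S') (hd : IsSmoothDiffeoOn h hinv S S')
    {CA : DiscreteCoordination S} {CB : DiscreteCoordination S'}
    (hgrid : h '' CA.grid = CB.grid) {v : Euc d} (hvS : v ∈ S) {a b : Fin d} (hab : a ≠ b)
    (haxv : axesOf CA v = {a, b}) {εv : ℝ} (hlv : locGrid CA v εv)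
    {ep em : Fin d} {θp θm : ℝ}
    (hkp : ∃ k, CB.A ep k = θp) (hkm : ∃ k, CB.A em k = θm)
    (hwp : ∀ z ∈ wall v εv (axesOf CA v) a {b}, (h z) ep = θp)
    (hwm : ∀ z ∈ wall v εv (axesOf CA v) a ∅, (h z) em = θm) :
    ep = em ∧ θp = θm := by
  classical
  set v' := h v with hv'
  have hv'S' : v' ∈ S' := hd.mapsTo hvS
  set IA := axesOf CA v with hIA
  set IB := axesOf CB v' with hIB
  have haIA : a ∈ IA := by rw [haxv]; exact Finset.mem_insert_self a _
  have hbIA : b ∈ IA := by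
    rw [haxv]; exact Finset.mem_insert_of_mem (Finset.mem_singleton_self b)
  obtain ⟨ε1', hlB⟩ := exists_locGrid hS' CB hv'S'
  obtain ⟨ε2, hε2pos, hε2le, hballS, himg⟩ := diffeo_nest hd hS hvS hlB.1 hlv.1
  have hlv2 : locGrid CA v ε2 := hlv.mono hε2le hε2pos
  -- the quadrant map q
  have hqex : ∀ σ : Finset (Fin d), ∃ τ, τ ⊆ IB ∧
      h '' (orth v ε2 IA σ) ⊆ orth v' ε1' IB τ := fun σ =>
    orth_image hS hS' hd hgrid hvS hlv2 hlB himg σ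
  choose q hqsub hq using hqex
  -- the three wall steps
  have hstep_p := wall_step hS hS' hd hgrid hvS hlv2 hlB himg q hq haIA
    (show a ∉ ({b} : Finset (Fin d)) from fun hc => hab (Finset.mem_singleton.1 hc)) hkp
    (fun z hz => hwp z (wall_mono hε2le _ _ _ hz))
  have hstep_m := wall_step hS hS' hd hgrid hvS hlv2 hlB himg q hq haIA
    (Finset.notMem_empty a) hkm
    (fun z hz => hwm z (wall_mono hε2le _ _ _ hz))
  -- the third wall: image separator obtained from noncross_image
  obtain ⟨w₃, hw₃⟩ := (wall_nonempty_closure hlv2.1 IA b {a}).1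
  obtain ⟨e₃, k₃, hwimg₃⟩ := noncross_image hS hS' hd hgrid
    (show wall v ε2 IA b {a} ⊆ S from fun z hz => hlv2.2.1 hz.1)
    (wall_convex v ε2 IA b {a}).isPreconnected
    (fun w hw => by rw [wall_noncross hlv2 hbIA {a} hw, Finset.card_singleton]) hw₃
  have hstep_3 := wall_step hS hS' hd hgrid hvS hlv2 hlB himg q hq hbIA
    (show b ∉ ({a} : Finset (Fin d)) from fun hc => hab (Finset.mem_singleton.1 hc).symm)
    ⟨k₃, rfl⟩ (fun z hz => (hwimg₃ z hz).2)
  obtain ⟨hθpv, hepIB, hflip_p, hsame_p⟩ := hstep_p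
  obtain ⟨hθmv, hemIB, hflip_m, hsame_m⟩ := hstep_m
  obtain ⟨hθ3v, he3IB, hflip_3, hsame_3⟩ := hstep_3
  -- if the axes agree, so do the thresholds
  by_cases hepem : ep = em
  · refine ⟨hepem, ?_⟩
    rw [← hθpv, ← hθmv, hepem]
  exfalso
  -- the pair {a,b}-insert normalization
  have hq3 : q (insert b {a}) = q ({a, b} : Finset (Fin d)) := by
    congr 1
    rw [Finset.pair_comm]
  rw [hq3] at hflip_3 hsame_3
  -- surjectivity of the quadrant map
  have hsurj : ∀ τ : Finset (Fin d), τ ⊆ IB → ∃ σ, σ ⊆ IA ∧ ∀ f ∈ IB, (f ∈ q σ ↔ f ∈ τ) := by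
    intro τ hτ
    -- find a point of the ball mapping into the τ-orthant
    have hopen : IsOpen (h '' ball v ε2) := diffeo_image_open hd hS' hballS isOpen_ball
    have hymem : v' ∈ h '' ball v ε2 := ⟨v, mem_ball_self hε2pos, rfl⟩
    have hcl := mem_closure_orth (x := v') hlB.1 IB τ
    rw [_root_.mem_closure_iff] at hcl
    obtain ⟨y, hy1, hy2⟩ := hcl (h '' ball v ε2) hopen hymem
    obtain ⟨p, hp, rfl⟩ := hy1
    have hpoff : p ∈ S ∧ p ∉ CA.grid := by
      have := orth_offgrid hlB τ hy2
      have hpS : p ∈ S := hballS hp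
      exact ⟨hpS, fun hg => this.2 ((diffeo_image_offgrid hd hgrid hpS).2 hg)⟩
    set σ := IA.filter (fun i => v i < p i) with hσ
    have hpmem : p ∈ orth v ε2 IA σ := by
      refine ⟨hp, ?_⟩
      intro i hi
      have hne : p i ≠ v i := fun heq =>
        hpoff.2 ((hlv2.grid_iff hp).2 ⟨i, hi, heq⟩)
      by_cases hmem : i ∈ σ
      · rw [if_pos hmem]; exact (Finset.mem_filter.1 hmem).2
      · rw [if_neg hmem]
        have : ¬ v i < p i := fun hc => hmem (Finset.mem_filter.2 ⟨hi, hc⟩)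
        exact lt_of_le_of_ne (not_lt.1 this) hne
    have h1 : h p ∈ orth v' ε1' IB (q σ) := hq σ ⟨p, hpmem, rfl⟩
    exact ⟨σ, Finset.filter_subset _ _, orth_disjoint h1 hy2⟩
  -- IB = {ep, em}
  have hIB2 : IB = {ep, em} := by
    have hcard : IB.card = 2 := by
      have h1 : IB.card = IA.card := by
        show (axesOf CB (h v)).card = (axesOf CA v).card
        exact card_axes_eq hS hS' hd hgrid hvS
      rw [h1, haxv]
      rw [Finset.card_insert_of_notMem (fun hc => hab (Finset.mem_singleton.1 hc)),
        Finset.card_singleton]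
    have hsub : ({ep, em} : Finset (Fin d)) ⊆ IB := by
      intro f hf
      rcases Finset.mem_insert.1 hf with rfl | hf
      · exact hepIB
      · rw [Finset.mem_singleton.1 hf]; exact hemIB
    have hcard2 : ({ep, em} : Finset (Fin d)).card = 2 := by
      rw [Finset.card_insert_of_notMem (fun hc => hepem (Finset.mem_singleton.1 hc)),
        Finset.card_singleton]
    exact (Finset.eq_of_subset_of_card_le hsub (by rw [hcard, hcard2])).symm
  -- translate to booleans
  set g : Finset (Fin d) → Bool × Bool := fun σ => (decide (ep ∈ q σ), decide (em ∈ q σ)) with hg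
  have hg1a : (g {a, b}).1 = !(g {b}).1 := by
    show decide (ep ∈ q (insert a {b})) = !(decide (ep ∈ q {b}))
    rw [← decide_not, decide_eq_decide]
    exact hflip_p
  have hg1b : (g {a, b}).2 = (g {b}).2 := by
    show decide (em ∈ q (insert a {b})) = decide (em ∈ q {b})
    rw [decide_eq_decide]
    exact hsame_p em hemIB (fun hc => hepem hc.symm)
  have hg2a : (g {a}).2 = !(g ∅).2 := by
    show decide (em ∈ q (insert a ∅)) = !(decide (em ∈ q ∅))
    rw [← decide_not, decide_eq_decide]
    exact hflip_m
  have hg2b : (g {a}).1 = (g ∅).1 := by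
    show decide (ep ∈ q (insert a ∅)) = decide (ep ∈ q ∅)
    rw [decide_eq_decide]
    exact hsame_m ep hepIB hepem
  have hg3 : ((g {a, b}).1 = !(g {a}).1 ∧ (g {a, b}).2 = (g {a}).2) ∨
      ((g {a, b}).2 = !(g {a}).2 ∧ (g {a, b}).1 = (g {a}).1) := by
    have he3 : e₃ = ep ∨ e₃ = em := by
      have h9 : e₃ ∈ IB := he3IB
      rw [hIB2] at h9
      rcases Finset.mem_insert.1 h9 with h1 | h1
      · exact Or.inl h1
      · exact Or.inr (Finset.mem_singleton.1 h1)
    rcases he3 with rfl | rfl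
    · left
      constructor
      · show decide (e₃ ∈ q {a, b}) = !(decide (e₃ ∈ q (insert a ∅)))
        rw [← decide_not, decide_eq_decide]
        exact hflip_3
      · show decide (em ∈ q {a, b}) = decide (em ∈ q (insert a ∅))
        rw [decide_eq_decide]
        exact hsame_3 em hemIB (fun hc => hepem hc.symm)
    · right
      constructor
      · show decide (e₃ ∈ q {a, b}) = !(decide (e₃ ∈ q (insert a ∅)))
        rw [← decide_not, decide_eq_decide]
        exact hflip_3
      · show decide (ep ∈ q {a, b}) = decide (ep ∈ q (insert a ∅))
        rw [decide_eq_decide]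
        exact hsame_3 ep hepIB hepem
  -- surjectivity in boolean form
  have hgsurj : ∀ t : Bool × Bool, t = g ∅ ∨ t = g {a} ∨ t = g {b} ∨ t = g {a, b} := by
    intro t
    set τ : Finset (Fin d) := (if t.1 then {ep} else ∅) ∪ (if t.2 then {em} else ∅) with hτ
    have hτIB : τ ⊆ IB := by
      intro f hf
      rcases Finset.mem_union.1 hf with h1 | h1
      · by_cases ht : t.1
        · rw [if_pos ht] at h1; rw [Finset.mem_singleton.1 h1]; exact hepIB
        · rw [if_neg ht] at h1; exact absurd h1 (Finset.notMem_empty f)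
      · by_cases ht : t.2
        · rw [if_pos ht] at h1; rw [Finset.mem_singleton.1 h1]; exact hemIB
        · rw [if_neg ht] at h1; exact absurd h1 (Finset.notMem_empty f)
    have hepτ : ep ∈ τ ↔ t.1 = true := by
      rw [hτ]
      constructor
      · intro hmem
        rcases Finset.mem_union.1 hmem with h1 | h1
        · by_cases ht : t.1
          · exact ht
          · rw [if_neg ht] at h1; exact absurd h1 (Finset.notMem_empty ep)
        · by_cases ht : t.2
          · rw [if_pos ht] at h1
            exact absurd (Finset.mem_singleton.1 h1) hepem
          · rw [if_neg ht] at h1; exact absurd h1 (Finset.notMem_empty ep)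
      · intro ht
        exact Finset.mem_union.2 (Or.inl (by rw [if_pos ht]; exact Finset.mem_singleton_self ep))
    have hemτ : em ∈ τ ↔ t.2 = true := by
      rw [hτ]
      constructor
      · intro hmem
        rcases Finset.mem_union.1 hmem with h1 | h1
        · by_cases ht : t.1
          · rw [if_pos ht] at h1
            exact absurd (Finset.mem_singleton.1 h1).symm hepem
          · rw [if_neg ht] at h1; exact absurd h1 (Finset.notMem_empty em)
        · by_cases ht : t.2
          · exact ht
          · rw [if_neg ht] at h1; exact absurd h1 (Finset.notMem_empty em)
      · intro ht
        exact Finset.mem_union.2 (Or.inr (by rw [if_pos ht]; exact Finset.mem_singleton_self em))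
    obtain ⟨σ, hσIA, hσval⟩ := hsurj τ hτIB
    have hgt : g σ = t := by
      have h1 : decide (ep ∈ q σ) = t.1 := by
        by_cases hc : ep ∈ q σ
        · rw [decide_eq_true hc]
          exact (hepτ.1 ((hσval ep hepIB).1 hc)).symm
        · rw [decide_eq_false hc]
          rcases Bool.eq_false_or_eq_true t.1 with ht | ht
          · exact absurd ((hσval ep hepIB).2 (hepτ.2 ht)) hc
          · exact ht.symm
      have h2 : decide (em ∈ q σ) = t.2 := by
        by_cases hc : em ∈ q σ
        · rw [decide_eq_true hc]
          exact (hemτ.1 ((hσval em hemIB).1 hc)).symm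
        · rw [decide_eq_false hc]
          rcases Bool.eq_false_or_eq_true t.2 with ht | ht
          · exact absurd ((hσval em hemIB).2 (hemτ.2 ht)) hc
          · exact ht.symm
      rw [hg]
      rw [Prod.ext_iff]
      exact ⟨h1, h2⟩
    have hσ4 : σ = ∅ ∨ σ = {a} ∨ σ = {b} ∨ σ = {a, b} := by
      apply subset_pair
      have h9 : σ ⊆ IA := hσIA
      rw [haxv] at h9
      exact h9
    rcases hσ4 with rfl | rfl | rfl | rfl
    · exact Or.inl hgt.symm
    · exact Or.inr (Or.inl hgt.symm)
    · exact Or.inr (Or.inr (Or.inl hgt.symm))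
    · exact Or.inr (Or.inr (Or.inr hgt.symm))
  exact bool_c4 (g ∅) (g {a}) (g {b}) (g {a, b}) hg1a hg1b hg2a hg2b hg3 hgsurj


-- ====================== local constancy around a grid point ======================

lemma local_const (hS : IsOpen S) (hS' : IsOpen S') (hd : IsSmoothDiffeoOn h hinv S S')
    {CA : DiscreteCoordination S} {CB : DiscreteCoordination S'}
    (hgrid : h '' CA.grid = CB.grid) {x : Euc d} (hx : x ∈ S) {a0 : Fin d}
    (ha0 : a0 ∈ axesOf CA x) :
    ∃ (e : Fin d) (θ : ℝ), (∃ k, CB.A e k = θ) ∧ ∃ ε, locGrid CA x ε ∧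
      ∀ z ∈ ball x ε, z a0 = x a0 → (h z) e = θ := by
  classical
  obtain ⟨ε, hlx⟩ := exists_locGrid hS CA hx
  set IA := axesOf CA x with hIA
  set J := IA.erase a0 with hJ
  -- each wall maps into a single separator
  have hval : ∀ σ : Finset (Fin d), ∃ (e : Fin d) (θ : ℝ), (∃ k, CB.A e k = θ) ∧
      ∀ z ∈ wall x ε IA a0 σ, (h z) e = θ := by
    intro σ
    obtain ⟨w₀, hw₀⟩ := (wall_nonempty_closure hlx.1 IA a0 σ).1
    obtain ⟨e, k, hwk⟩ := noncross_image hS hS' hd hgrid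
      (show wall x ε IA a0 σ ⊆ S from fun z hz => hlx.2.1 hz.1)
      (wall_convex x ε IA a0 σ).isPreconnected
      (fun w hw => by rw [wall_noncross hlx ha0 σ hw, Finset.card_singleton]) hw₀
    exact ⟨e, CB.A e k, ⟨k, rfl⟩, fun z hz => (hwk z hz).2⟩
  choose e θ hk hwimg using hval
  -- adjacent walls have the same value
  have hadj : ∀ (σ : Finset (Fin d)), σ ⊆ J → ∀ b ∈ J, b ∉ σ →
      e (insert b σ) = e σ ∧ θ (insert b σ) = θ σ := by
    intro σ hσJ b hbJ hbσ
    obtain ⟨hba0, hbIA⟩ := Finset.mem_erase.1 hbJ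
    -- the codimension-2 point v
    set K := J.erase b with hK
    set δv := ε / (2 * (K.card + 1)) with hδv
    have hδvpos : 0 < δv := by
      have := hlx.1
      rw [hδv]; positivity
    set v := perturb x K σ δv with hv
    have hvball : v ∈ ball x ε := by
      rw [mem_ball]
      calc dist v x ≤ K.card * |δv| := perturb_dist x K σ δv
      _ = K.card * δv := by rw [abs_of_pos hδvpos]
      _ < ε := aux_mul_div_lt (by positivity) hlx.1
    have hvS : v ∈ S := hlx.2.1 hvball
    have ha0K : a0 ∉ K := fun hc => (Finset.mem_erase.1 (Finset.mem_erase.1 hc).2).1 rfl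
    have hbK : b ∉ K := fun hc => (Finset.mem_erase.1 hc).1 rfl
    have hva0 : v a0 = x a0 := by
      rw [hv, perturb_coord, if_neg ha0K, add_zero]
    have hvb : v b = x b := by
      rw [hv, perturb_coord, if_neg hbK, add_zero]
    have hvK : ∀ i ∈ K, v i = x i + (if i ∈ σ then δv else -δv) := by
      intro i hi
      rw [hv, perturb_coord, if_pos hi]
    have hvoff : ∀ i, i ∉ K → v i = x i := by
      intro i hi
      rw [hv, perturb_coord, if_neg hi, add_zero]
    -- the axes through v
    have haxv : axesOf CA v = {a0, b} := by
      apply Finset.ext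
      intro i
      rw [Finset.mem_insert, Finset.mem_singleton]
      constructor
      · intro hi
        obtain ⟨hvix, hiIA⟩ := hlx.coord_eq hvball hi
        by_contra hne
        push_neg at hne
        have hiK : i ∈ K := Finset.mem_erase.2 ⟨hne.2, Finset.mem_erase.2 ⟨hne.1, hiIA⟩⟩
        have := hvK i hiK
        rw [hvix] at this
        by_cases hiσ : i ∈ σ
        · rw [if_pos hiσ] at this; linarith
        · rw [if_neg hiσ] at this; linarith
      · intro hi
        rcases hi with rfl | rfl
        · obtain ⟨k, hk'⟩ := mem_axesOf.1 ha0
          exact mem_axesOf.2 ⟨k, by rw [hva0, hk']⟩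
        · obtain ⟨k, hk'⟩ := mem_axesOf.1 hbIA
          exact mem_axesOf.2 ⟨k, by rw [hvb, hk']⟩
    -- a good radius at v
    obtain ⟨εv₀, hlv₀⟩ := exists_locGrid hS CA hvS
    obtain ⟨εv, hεvpos, hεvle, hεvgap⟩ := exists_pos_min
      (K.image (fun i => |v i - x i|))
      (by
        intro r hr
        obtain ⟨i, hi, rfl⟩ := Finset.mem_image.1 hr
        rw [abs_pos, sub_ne_zero]
        intro hc
        have := hvK i hi
        rw [hc] at this
        by_cases hiσ : i ∈ σ
        · rw [if_pos hiσ] at this; linarith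
        · rw [if_neg hiσ] at this; linarith)
      (show (0:ℝ) < min εv₀ (ε - dist v x) by
        refine lt_min hlv₀.1 ?_
        have := mem_ball.1 hvball
        linarith)
    have hlv : locGrid CA v εv := hlv₀.mono (le_trans hεvle (min_le_left _ _)) hεvpos
    have hballv : ball v εv ⊆ ball x ε := by
      intro z hz
      rw [mem_ball] at *
      have h1 : dist z x ≤ dist z v + dist v x := dist_triangle _ _ _
      have h2 : εv ≤ ε - dist v x := le_trans hεvle (min_le_right _ _)
      linarith
    -- wall inclusions
    have hsignK : ∀ z ∈ ball v εv, ∀ i ∈ K, (if i ∈ σ then x i < z i else z i < x i) := by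
      intro z hz i hiK
      have hρg : εv ≤ |v i - x i| := hεvgap _ (Finset.mem_image.2 ⟨i, hiK, rfl⟩)
      have hst := side_stable (c := x i) (w := v i) (z := z i)
        (lt_of_le_of_lt (coord_abs_le_dist z v i) (lt_of_lt_of_le (mem_ball.1 hz) hρg))
      have := hvK i hiK
      by_cases hiσ : i ∈ σ
      · rw [if_pos hiσ]
        rw [if_pos hiσ] at this
        exact hst.1 (by rw [this]; linarith)
      · rw [if_neg hiσ]
        rw [if_neg hiσ] at this
        exact hst.2 (by rw [this]; linarith)
    have hincl : ∀ z ∈ wall v εv (axesOf CA v) a0 {b}, z ∈ wall x ε IA a0 (insert b σ) := by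
      intro z hz
      obtain ⟨hzball, hza0, hzsgn⟩ := hz
      refine ⟨hballv hzball, by rw [hza0, hva0], ?_⟩
      intro i hiIA hia0
      by_cases hib : i = b
      · subst hib
        have := hzsgn i (by rw [haxv]; exact Finset.mem_insert_of_mem (Finset.mem_singleton_self i)) hia0
        rw [if_pos (Finset.mem_singleton_self i)] at this
        rw [if_pos (Finset.mem_insert_self i σ), ← hvb]
        exact this
      · have hiK : i ∈ K := Finset.mem_erase.2 ⟨hib, Finset.mem_erase.2 ⟨hia0, hiIA⟩⟩
        have := hsignK z hzball i hiK
        by_cases hiσ : i ∈ σ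
        · rw [if_pos hiσ] at this
          rw [if_pos (Finset.mem_insert_of_mem hiσ)]
          exact this
        · rw [if_neg hiσ] at this
          rw [if_neg (fun hc => by rcases Finset.mem_insert.1 hc with h1 | h1; exact hib h1; exact hiσ h1)]
          exact this
    have hincl' : ∀ z ∈ wall v εv (axesOf CA v) a0 ∅, z ∈ wall x ε IA a0 σ := by
      intro z hz
      obtain ⟨hzball, hza0, hzsgn⟩ := hz
      refine ⟨hballv hzball, by rw [hza0, hva0], ?_⟩
      intro i hiIA hia0
      by_cases hib : i = b
      · subst hib
        have := hzsgn i (by rw [haxv]; exact Finset.mem_insert_of_mem (Finset.mem_singleton_self i)) hia0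
        rw [if_neg (Finset.notMem_empty i)] at this
        rw [if_neg hbσ, ← hvb]
        exact this
      · have hiK : i ∈ K := Finset.mem_erase.2 ⟨hib, Finset.mem_erase.2 ⟨hia0, hiIA⟩⟩
        exact hsignK z hzball i hiK
    -- apply no_bend at v
    have := no_bend hS hS' hd hgrid hvS (fun hc => hba0 hc.symm) haxv hlv
      (hk (insert b σ)) (hk σ)
      (fun z hz => hwimg (insert b σ) z (hincl z hz))
      (fun z hz => hwimg σ z (hincl' z hz))
    exact this
  -- all wall patterns within J share the same value
  have hchain : ∀ (n : ℕ) (σ : Finset (Fin d)), σ.card ≤ n → σ ⊆ J →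
      e σ = e ∅ ∧ θ σ = θ ∅ := by
    intro n
    induction n with
    | zero =>
      intro σ hcard _
      rw [Finset.card_eq_zero.1 (Nat.le_zero.1 hcard)]
      exact ⟨rfl, rfl⟩
    | succ n ih =>
      intro σ hcard hσJ
      rcases Finset.eq_empty_or_nonempty σ with rfl | ⟨b, hb⟩
      · exact ⟨rfl, rfl⟩
      · have hins : insert b (σ.erase b) = σ := Finset.insert_erase hb
        have hsub : σ.erase b ⊆ J := fun i hi => hσJ (Finset.erase_subset _ _ hi)
        have hstep := hadj (σ.erase b) hsub b (hσJ hb) (Finset.notMem_erase b σ)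
        rw [hins] at hstep
        have hih := ih (σ.erase b) (by
          have := Finset.card_erase_of_mem hb
          omega) hsub
        exact ⟨hstep.1.trans hih.1, hstep.2.trans hih.2⟩
  have hvalσ : ∀ σ : Finset (Fin d), σ ⊆ J → e σ = e ∅ ∧ θ σ = θ ∅ :=
    fun σ hσJ => hchain σ.card σ le_rfl hσJ
  -- conclude by density of wall points in the hyperplane piece
  refine ⟨e ∅, θ ∅, hk ∅, ε, hlx, ?_⟩
  intro z hzball hza0
  have hzS : z ∈ S := hlx.2.1 hzball
  by_contra hne
  set η := |(h z) (e ∅) - θ ∅| with hη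
  have hηpos : 0 < η := by
    rw [hη, abs_pos, sub_ne_zero]
    exact hne
  have hcont := diffeo_contAt hd hS hzS
  rw [Metric.continuousAt_iff] at hcont
  obtain ⟨δc, hδcpos, hδc⟩ := hcont η hηpos
  -- choose a good small t
  have hmarg : 0 < ε - dist z x := by
    have := mem_ball.1 hzball
    linarith
  set m := min δc (ε - dist z x) / (J.card + 1) with hm
  have hmpos : 0 < m := by rw [hm]; positivity
  have hbad : (Set.Ioo (0:ℝ) m).Infinite := Set.Ioo_infinite hmpos
  obtain ⟨t, htIoo, htbad⟩ := hbad.exists_notMem_finset (J.image (fun i => x i - z i))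
  obtain ⟨htpos, htm⟩ := htIoo
  set w := z + ∑ i ∈ J, EuclideanSpace.single i t with hw
  have hwcoord : ∀ j, w j = z j + (if j ∈ J then t else 0) := by
    intro j
    show z j + (∑ i ∈ J, EuclideanSpace.single i t : Euc d) j = _
    congr 1
    rw [sum_coord]
    rw [show (∑ i ∈ J, (EuclideanSpace.single i t : Euc d) j)
        = ∑ i ∈ J, (if j = i then t else 0) from
      Finset.sum_congr rfl fun i _ => single_coord i j _]
    rw [Finset.sum_ite_eq J j (fun _ => t)]
  have hwdist : dist w z ≤ J.card * t := by
    rw [hw, dist_eq_norm, add_sub_cancel_left]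
    refine le_trans (norm_sum_le _ _) ?_
    rw [show (J.card : ℝ) * t = ∑ _i ∈ J, t by rw [Finset.sum_const, nsmul_eq_mul]]
    apply Finset.sum_le_sum
    intro i _
    rw [EuclideanSpace.norm_single, Real.norm_eq_abs, abs_of_pos htpos]
  have hwsmall : (J.card : ℝ) * t < min δc (ε - dist z x) := by
    have h1 : (J.card : ℝ) * t < (J.card : ℝ) * m + t := by
      nlinarith [htm, htpos, Nat.cast_nonneg (α := ℝ) J.card]
    have h2 : (J.card : ℝ) * m + m ≤ min δc (ε - dist z x) := by
      rw [hm]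
      rw [show (J.card : ℝ) * (min δc (ε - dist z x) / (J.card + 1)) + min δc (ε - dist z x) / (J.card + 1)
          = min δc (ε - dist z x) by field_simp]
    nlinarith [htm]
  -- w is a wall point
  have hwa0 : w a0 = x a0 := by
    rw [hwcoord, if_neg (fun hc => (Finset.mem_erase.1 hc).1 rfl), add_zero, hza0]
  have hwball : w ∈ ball x ε := by
    rw [mem_ball]
    have h1 : dist w x ≤ dist w z + dist z x := dist_triangle _ _ _
    have h2 : (J.card : ℝ) * t < ε - dist z x := lt_of_lt_of_le hwsmall (min_le_right _ _)
    linarith [hwdist]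
  have hwne : ∀ i ∈ J, w i ≠ x i := by
    intro i hi hc
    apply htbad
    rw [hwcoord, if_pos hi] at hc
    refine Finset.mem_image.2 ⟨i, hi, ?_⟩
    linarith
  set σt := J.filter (fun i => x i < w i) with hσt
  have hwmem : w ∈ wall x ε IA a0 σt := by
    refine ⟨hwball, hwa0, ?_⟩
    intro i hiIA hia0
    have hiJ : i ∈ J := Finset.mem_erase.2 ⟨hia0, hiIA⟩
    by_cases hiσ : i ∈ σt
    · rw [if_pos hiσ]
      exact (Finset.mem_filter.1 hiσ).2
    · rw [if_neg hiσ]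
      have h1 : ¬ x i < w i := fun hc => hiσ (Finset.mem_filter.2 ⟨hiJ, hc⟩)
      exact lt_of_le_of_ne (not_lt.1 h1) (hwne i hiJ)
  have hwval := hwimg σt w hwmem
  have hσtJ : σt ⊆ J := Finset.filter_subset _ _
  obtain ⟨he, hθ⟩ := hvalσ σt hσtJ
  rw [he, hθ] at hwval
  -- contradiction with continuity
  have hwz : dist w z < δc := by
    have := lt_of_lt_of_le hwsmall (min_le_left _ _)
    linarith [hwdist]
  have hcc : |(h z) (e ∅) - (h w) (e ∅)| ≤ dist (h z) (h w) := coord_abs_le_dist _ _ _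
  rw [hwval] at hcc
  have : η < η := by
    calc η = |(h z) (e ∅) - θ ∅| := hη
    _ ≤ dist (h z) (h w) := hcc
    _ < η := by rw [dist_comm]; exact hδc hwz
  exact lt_irrefl _ this


-- ====================== global constancy and the separator image lemma ======================

/-- a locally constant assignment on a preconnected set is constant. -/
lemma loc_const_global {W : Set (Euc d)} (hWc : IsPreconnected W) {α : Type*}
    (f : (w : Euc d) → w ∈ W → α)
    (hloc : ∀ (w) (hw : w ∈ W), ∃ δ > 0, ∀ (w2) (hw2 : w2 ∈ W), w2 ∈ ball w δ → f w2 hw2 = f w hw)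
    {w₀} (hw₀ : w₀ ∈ W) : ∀ (w) (hw : w ∈ W), f w hw = f w₀ hw₀ := by
  classical
  choose δ hδpos hδ using hloc
  intro w1 hw1
  by_contra hne
  set U : Set (Euc d) := ⋃ (w : Euc d) (hw : w ∈ W) (_ : f w hw = f w₀ hw₀), ball w (δ w hw) with hU
  set V : Set (Euc d) := ⋃ (w : Euc d) (hw : w ∈ W) (_ : ¬ f w hw = f w₀ hw₀), ball w (δ w hw) with hV
  have hUo : IsOpen U := isOpen_iUnion fun w => isOpen_iUnion fun _ => isOpen_iUnion fun _ => isOpen_ball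
  have hVo : IsOpen V := isOpen_iUnion fun w => isOpen_iUnion fun _ => isOpen_iUnion fun _ => isOpen_ball
  have hcov : W ⊆ U ∪ V := by
    intro w hw
    by_cases hc : f w hw = f w₀ hw₀
    · exact Or.inl (mem_iUnion.2 ⟨w, mem_iUnion.2 ⟨hw, mem_iUnion.2 ⟨hc, mem_ball_self (hδpos w hw)⟩⟩⟩)
    · exact Or.inr (mem_iUnion.2 ⟨w, mem_iUnion.2 ⟨hw, mem_iUnion.2 ⟨hc, mem_ball_self (hδpos w hw)⟩⟩⟩)
  have hWU : (W ∩ U).Nonempty :=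
    ⟨w₀, hw₀, mem_iUnion.2 ⟨w₀, mem_iUnion.2 ⟨hw₀, mem_iUnion.2 ⟨rfl, mem_ball_self (hδpos w₀ hw₀)⟩⟩⟩⟩
  have hWV : (W ∩ V).Nonempty :=
    ⟨w1, hw1, mem_iUnion.2 ⟨w1, mem_iUnion.2 ⟨hw1, mem_iUnion.2 ⟨hne, mem_ball_self (hδpos w1 hw1)⟩⟩⟩⟩
  obtain ⟨z, hzW, hzU, hzV⟩ := hWc U V hUo hVo hcov hWU hWV
  obtain ⟨wa, hha⟩ := mem_iUnion.1 hzU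
  obtain ⟨hwaW, hha2⟩ := mem_iUnion.1 hha
  obtain ⟨hca, hball_a⟩ := mem_iUnion.1 hha2
  obtain ⟨wb, hhb⟩ := mem_iUnion.1 hzV
  obtain ⟨hwbW, hhb2⟩ := mem_iUnion.1 hhb
  obtain ⟨hcb, hball_b⟩ := mem_iUnion.1 hhb2
  exact hcb (((hδ wb hwbW z hzW hball_b).symm.trans (hδ wa hwaW z hzW hball_a)).trans hca)

/-- the image of an A-separator is contained in a B-separator. -/
lemma sep_image_subset (hS : IsOpen S) (hS' : IsOpen S') (hd : IsSmoothDiffeoOn h hinv S S')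
    {CA : DiscreteCoordination S} {CB : DiscreteCoordination S'}
    (hgrid : h '' CA.grid = CB.grid) (i : Fin d) (k : Fin (CA.n i)) :
    ∃ (e : Fin d) (k' : Fin (CB.n e)),
      h '' (Gamma S i (CA.A i k)) ⊆ Gamma S' e (CB.A e k') := by
  classical
  set H := Gamma S i (CA.A i k) with hH
  have hHS : H ⊆ S := gamma_subset i (CA.A i k)
  have hHc : IsPreconnected H := (CA.sep i k).1.isPreconnected
  have hHne : H.Nonempty := (CA.sep i k).1.nonempty
  have hax : ∀ x ∈ H, i ∈ axesOf CA x := fun x hx => mem_axesOf.2 ⟨k, hx.2⟩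
  -- local values
  have hval : ∀ (x : Euc d) (hx : x ∈ H), ∃ (e : Fin d) (θ : ℝ), (∃ k', CB.A e k' = θ) ∧
      ∃ ε, locGrid CA x ε ∧ ∀ z ∈ ball x ε, z i = x i → (h z) e = θ :=
    fun x hx => local_const hS hS' hd hgrid (hHS hx) (hax x hx)
  choose e θ hk hloc using hval
  choose ε hlε hεprop using hloc
  -- local constancy of the assignment
  have hloccst : ∀ (x) (hx : x ∈ H), ∃ δ > 0, ∀ (x2) (hx2 : x2 ∈ H), x2 ∈ ball x δ →
      (e x2 hx2, θ x2 hx2) = (e x hx, θ x hx) := by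
    intro x hx
    refine ⟨ε x hx, (hlε x hx).1, ?_⟩
    intro x2 hx2 hball
    -- a common noncrossing witness near x2
    have hx2S : x2 ∈ S := hHS hx2
    obtain ⟨ρ, hρpos, hρle, _⟩ := exists_pos_min (∅ : Finset ℝ)
      (fun r hr => absurd hr (Finset.notMem_empty r))
      (show (0:ℝ) < min (ε x2 hx2) (ε x hx - dist x2 x) by
        refine lt_min (hlε x2 hx2).1 ?_
        have := mem_ball.1 hball
        linarith)
    have hlρ : locGrid CA x2 ρ := (hlε x2 hx2).mono (le_trans hρle (min_le_left _ _)) hρpos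
    obtain ⟨w, hw⟩ := (wall_nonempty_closure hρpos (axesOf CA x2) i ∅).1
    have hwx2ball : w ∈ ball x2 (ε x2 hx2) := by
      rw [mem_ball]
      exact lt_of_lt_of_le (mem_ball.1 hw.1) (le_trans hρle (min_le_left _ _))
    have hwxball : w ∈ ball x (ε x hx) := by
      rw [mem_ball]
      have h1 : dist w x ≤ dist w x2 + dist x2 x := dist_triangle _ _ _
      have h2 : dist w x2 < ρ := mem_ball.1 hw.1
      have h3 : ρ ≤ ε x hx - dist x2 x := le_trans hρle (min_le_right _ _)
      linarith
    have hwi2 : w i = x2 i := hw.2.1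
    have hwi : w i = x i := by rw [hwi2, hx2.2, ← hx.2]
    have hv1 : (h w) (e x hx) = θ x hx := hεprop x hx w hwxball hwi
    have hv2 : (h w) (e x2 hx2) = θ x2 hx2 := hεprop x2 hx2 w hwx2ball hwi2
    -- w is noncrossing, so its image is noncrossing
    have haxw : axesOf CA w = {i} := wall_noncross hlρ (hax x2 hx2) ∅ hw
    have hwS : w ∈ S := hlρ.2.1 hw.1
    have hcard : (axesOf CB (h w)).card = 1 := by
      rw [card_axes_eq hS hS' hd hgrid hwS, haxw, Finset.card_singleton]
    obtain ⟨f, hf⟩ := Finset.card_eq_one.1 hcard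
    have hm1 : e x hx ∈ axesOf CB (h w) := by
      obtain ⟨k', hk'⟩ := hk x hx
      exact mem_axesOf.2 ⟨k', by rw [hv1, hk']⟩
    have hm2 : e x2 hx2 ∈ axesOf CB (h w) := by
      obtain ⟨k', hk'⟩ := hk x2 hx2
      exact mem_axesOf.2 ⟨k', by rw [hv2, hk']⟩
    rw [hf, Finset.mem_singleton] at hm1 hm2
    have hee : e x2 hx2 = e x hx := by rw [hm1, hm2]
    have hθθ : θ x2 hx2 = θ x hx := by
      rw [← hv1, ← hv2, hee]
    rw [hee, hθθ]
  -- global constancy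
  obtain ⟨x₀, hx₀⟩ := hHne
  have hglob := loc_const_global hHc (fun x hx => (e x hx, θ x hx)) hloccst hx₀
  obtain ⟨k₀, hk₀⟩ := hk x₀ hx₀
  refine ⟨e x₀ hx₀, k₀, ?_⟩
  rintro y ⟨x, hx, rfl⟩
  have hglobx := hglob x hx
  have hee : e x hx = e x₀ hx₀ := congrArg Prod.fst hglobx
  have hθθ : θ x hx = θ x₀ hx₀ := congrArg Prod.snd hglobx
  refine ⟨hd.mapsTo (hHS hx), ?_⟩
  rw [hk₀, ← hθθ, ← hee]
  exact hεprop x hx x (mem_ball_self (hlε x hx).1) rfl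

/-- the image of an A-separator is exactly a B-separator. -/
lemma sep_image (hS : IsOpen S) (hS' : IsOpen S') (hd : IsSmoothDiffeoOn h hinv S S')
    {CA : DiscreteCoordination S} {CB : DiscreteCoordination S'}
    (hgrid : h '' CA.grid = CB.grid) (i : Fin d) (k : Fin (CA.n i)) :
    ∃ (e : Fin d) (k' : Fin (CB.n e)),
      h '' (Gamma S i (CA.A i k)) = Gamma S' e (CB.A e k') := by
  obtain ⟨e, k', hsub⟩ := sep_image_subset hS hS' hd hgrid i k
  obtain ⟨i2, k2, hsub2⟩ := sep_image_subset hS' hS (diffeo_symm hd) (diffeo_grid_inv hd hgrid) e k'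
  set H := Gamma S i (CA.A i k) with hH
  set G := Gamma S' e (CB.A e k') with hG
  have hHS : H ⊆ S := gamma_subset _ _
  have hGS' : G ⊆ S' := gamma_subset _ _
  have hHne : H.Nonempty := (CA.sep i k).1.nonempty
  -- H ⊆ hinv '' G
  have h1 : H ⊆ hinv '' G := by
    intro z hz
    exact ⟨h z, hsub ⟨z, hz, rfl⟩, hd.left_inv z (hHS hz)⟩
  -- hinv '' G is inside an A-separator, which must be H
  have h2 : H ⊆ Gamma S i2 (CA.A i2 k2) := fun z hz => hsub2 (h1 hz)
  obtain ⟨hii, hAA⟩ := gamma_le_gamma hS hHne h2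
  have h3 : hinv '' G ⊆ H := by
    intro z hz
    have h5 := hsub2 hz
    subst hii
    show z ∈ Gamma S i (CA.A i k)
    rw [hAA]
    exact h5
  have h4 : hinv '' G = H := Set.Subset.antisymm h3 h1
  refine ⟨e, k', ?_⟩
  rw [← h4]
  ext y
  constructor
  · rintro ⟨z, ⟨g, hg, rfl⟩, rfl⟩
    rwa [hd.right_inv g (hGS' hg)]
  · intro hy
    exact ⟨hinv y, ⟨y, hy, rfl⟩, hd.right_inv y (hGS' hy)⟩



-- ====================== final assembly helpers ======================

lemma img_img (hd : IsSmoothDiffeoOn h hinv S S') {V : Set (Euc d)} (hV : V ⊆ S) :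
    hinv '' (h '' V) = V := by
  ext z
  constructor
  · rintro ⟨y, ⟨w, hw, rfl⟩, rfl⟩
    rwa [hd.left_inv w (hV hw)]
  · intro hz
    exact ⟨h z, ⟨z, hz, rfl⟩, hd.left_inv z (hV hz)⟩

lemma mem_axisSet_of_eq {S' : Set (Euc d)} (CB : DiscreteCoordination S') {a a' : Fin d}
    (haa : a = a') (k : Fin (CB.n a)) : Gamma S' a (CB.A a k) ∈ CB.axisSet a' := by
  subst haa
  exact ⟨k, rfl⟩

end RPaux


open RPaux Metric in
/-- **Recovery of the partition into parallel-separator-sets.** -/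
theorem recovery_of_parallel_separator_sets
    {d : ℕ} {S S' : Set (Euc d)} (hS : IsOpen S) (hSc : IsConnected S)
    (hS' : IsOpen S') (hS'c : IsConnected S')
    {h hinv : Euc d → Euc d} (hdiff : IsSmoothDiffeoOn h hinv S S')
    (CA : DiscreteCoordination S) (hbb : CA.HasBackbone)
    (CB : DiscreteCoordination S')
    (hgrid : h '' CA.grid = CB.grid) :
    ∃ σ : Equiv.Perm (Fin d), ∀ i : Fin d,
      (∀ H ∈ CA.sepSet, (H ∈ CA.axisSet i ↔ h '' H ∈ CB.axisSet (σ i))) ∧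
      Set.BijOn (fun H => h '' H) (CA.axisSet i) (CB.axisSet (σ i)) := by
  classical
  obtain ⟨kstar, ⟨zstar, hzstar⟩, hbb2⟩ := hbb
  have hzmem : ∀ i, zstar ∈ Gamma S i (CA.A i (kstar i)) := by
    intro i
    have h1 : zstar ∈ (⋂ (i : Fin d), Gamma S i (CA.A i (kstar i))) := by
      rw [hzstar]; exact Set.mem_singleton zstar
    exact Set.mem_iInter.1 h1 i
  -- images of separators are separators
  have hchoice : ∀ (i : Fin d) (k : Fin (CA.n i)), ∃ (e : Fin d) (k' : Fin (CB.n e)),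
      h '' (Gamma S i (CA.A i k)) = Gamma S' e (CB.A e k') :=
    fun i k => sep_image hS hS' hdiff hgrid i k
  choose E K hEK using hchoice
  set β : Fin d → Fin d := fun i => E i (kstar i) with hβ
  have hne : ∀ (i : Fin d) (k : Fin (CA.n i)), (Gamma S i (CA.A i k)).Nonempty :=
    fun i k => (CA.sep i k).1.nonempty
  -- separators sharing a point and with equal axis are equal; distinct axes means images differ
  have himg_eq : ∀ (i : Fin d) (k : Fin (CA.n i)) (j : Fin d) (k2 : Fin (CA.n j)),
      E i k = E j k2 → ((Gamma S i (CA.A i k)) ∩ (Gamma S j (CA.A j k2))).Nonempty →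
      i = j := by
    intro i k j k2 hE hmeet
    obtain ⟨p, hp1, hp2⟩ := hmeet
    have hy1 : h p ∈ Gamma S' (E i k) (CB.A (E i k) (K i k)) := by
      rw [← hEK i k]; exact ⟨p, hp1, rfl⟩
    have hy2 : h p ∈ Gamma S' (E j k2) (CB.A (E j k2) (K j k2)) := by
      rw [← hEK j k2]; exact ⟨p, hp2, rfl⟩
    -- the two image separators have the same axis and share a point, so they are equal
    have hθ : CB.A (E i k) (K i k) = CB.A (E j k2) (K j k2) := by
      rw [← hy1.2, ← hy2.2, hE]
    have hGeq : Gamma S' (E i k) (CB.A (E i k) (K i k)) = Gamma S' (E j k2) (CB.A (E j k2) (K j k2)) := by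
      rw [hθ, hE]
    have hHeq : Gamma S i (CA.A i k) = Gamma S j (CA.A j k2) := by
      have h1 : hinv '' (h '' (Gamma S i (CA.A i k))) = hinv '' (h '' (Gamma S j (CA.A j k2))) := by
        rw [hEK i k, hEK j k2, hGeq]
      rwa [img_img hdiff (gamma_subset _ _), img_img hdiff (gamma_subset _ _)] at h1
    exact (gamma_eq_of_eq hS (hne i k) hHeq).1
  -- β is injective
  have hβinj : Function.Injective β := by
    intro i j hij
    by_contra hne'
    exact hne' (himg_eq i (kstar i) j (kstar j) hij ⟨zstar, hzmem i, hzmem j⟩)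
  have hβbij : Function.Bijective β := Finite.injective_iff_bijective.1 hβinj
  -- every separator on axis i maps to axis β i
  have haxis : ∀ (i : Fin d) (k : Fin (CA.n i)), E i k = β i := by
    intro i k
    obtain ⟨j, hj⟩ := hβbij.2 (E i k)
    by_cases hji : j = i
    · rw [← hj, hji]
    · exfalso
      have hmeet := hbb2 j i (fun hc => hji hc.symm) k
      have hj' : E j (kstar j) = E i k := hj
      exact hji (himg_eq j (kstar j) i k hj' hmeet)
  refine ⟨Equiv.ofBijective β hβbij, ?_⟩
  intro i
  have hσi : (Equiv.ofBijective β hβbij) i = β i := rfl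
  constructor
  · -- the iff
    rintro H ⟨j, k, rfl⟩
    constructor
    · rintro ⟨k2, hk2⟩
      rw [hk2, hEK i k2, hσi]
      exact mem_axisSet_of_eq CB (haxis i k2) (K i k2)
    · rintro ⟨k3, hk3⟩
      rw [hEK j k] at hk3
      have hGne : (Gamma S' (E j k) (CB.A (E j k) (K j k))).Nonempty := by
        rw [← hEK j k]
        exact ((hne j k).image h)
      obtain ⟨hax, _⟩ := gamma_eq_of_eq hS' hGne hk3
      rw [haxis j k, hσi] at hax
      have hji : j = i := hβinj hax
      subst hji
      exact ⟨k, rfl⟩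
  · refine ⟨?_, ?_, ?_⟩
    · -- maps to
      rintro H ⟨k2, rfl⟩
      show h '' (Gamma S i (CA.A i k2)) ∈ CB.axisSet ((Equiv.ofBijective β hβbij) i)
      rw [hEK i k2, hσi]
      exact mem_axisSet_of_eq CB (haxis i k2) (K i k2)
    · -- injective
      rintro H1 ⟨k1, rfl⟩ H2 ⟨k2, rfl⟩ heq
      have heq' : h '' (Gamma S i (CA.A i k1)) = h '' (Gamma S i (CA.A i k2)) := heq
      have h1 : hinv '' (h '' (Gamma S i (CA.A i k1))) = hinv '' (h '' (Gamma S i (CA.A i k2))) := by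
        rw [heq']
      rwa [img_img hdiff (gamma_subset _ _), img_img hdiff (gamma_subset _ _)] at h1
    · -- surjective
      rintro G ⟨k3, rfl⟩
      obtain ⟨i4, k4, hG4⟩ := sep_image hS' hS (diffeo_symm hdiff) (diffeo_grid_inv hdiff hgrid)
        (Equiv.ofBijective β hβbij i) k3
      have hG4' : h '' (Gamma S i4 (CA.A i4 k4)) = Gamma S' ((Equiv.ofBijective β hβbij) i)
          (CB.A ((Equiv.ofBijective β hβbij) i) k3) := by
        rw [← hG4]
        exact img_img (diffeo_symm hdiff) (gamma_subset _ _)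
      have hG4'' : h '' (Gamma S i4 (CA.A i4 k4)) = Gamma S' (E i4 k4) (CB.A (E i4 k4) (K i4 k4)) :=
        hEK i4 k4
      have hGne : (Gamma S' (E i4 k4) (CB.A (E i4 k4) (K i4 k4))).Nonempty := by
        rw [← hG4'']
        exact ((hne i4 k4).image h)
      obtain ⟨hax, _⟩ := gamma_eq_of_eq hS' hGne (hG4''.symm.trans hG4')
      rw [haxis i4 k4, hσi] at hax
      have : i4 = i := hβinj hax
      subst this
      exact ⟨Gamma S i4 (CA.A i4 k4), ⟨k4, rfl⟩, hG4'⟩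
end
end

section
/- Correspondence of halves along matched axes: Let S and S' be open connected subsets of ℝ^d and h : S → S' a smooth diffeomorphism. Let A be a discrete coordination on S whose axis-separator set 𝒢(A) has a backbone, let B be a discrete coordination on S', and suppose h(grid_S(A)) = grid_{S'}(B). Then there exists a permutation σ of {1,…,d} such that for every i, with j = σ(i), one has n_i = m_j =: K and the image under h of the family of halves along axis i equals the family of halves along axis j: {h(Γ_S⁻(i,A_{i,k})) : 1 ≤ k ≤ K} ∪ {h(Γ_S⁺(i,A_{i,k})) : 1 ≤ k ≤ K} = {Γ_{S'}⁻(j,B_{j,k}) : 1 ≤ k ≤ K} ∪ {Γ_{S'}⁺(j,B_{j,k}) : 1 ≤ k ≤ K} as sets of subsets of S'. -/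
open Set MeasureTheory Topology

noncomputable section

section Basics

variable {d : ℕ} {S S' : Set (Euc d)} {h hinv : Euc d → Euc d}

theorem IsSmoothDiffeoOn.symm (hd : IsSmoothDiffeoOn h hinv S S') :
    IsSmoothDiffeoOn hinv h S' S :=
  ⟨hd.mapsTo_inv, hd.mapsTo, hd.right_inv, hd.left_inv, hd.smooth_inv, hd.smooth⟩

theorem IsSmoothDiffeoOn.injOn (hd : IsSmoothDiffeoOn h hinv S S') : InjOn h S :=
  fun x hx y hy hxy => by rw [← hd.left_inv x hx, hxy, hd.left_inv y hy]

theorem IsSmoothDiffeoOn.image_S (hd : IsSmoothDiffeoOn h hinv S S') : h '' S = S' := by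
  apply Subset.antisymm (image_subset_iff.2 fun x hx => hd.mapsTo hx)
  intro z hz
  exact ⟨hinv z, hd.mapsTo_inv hz, hd.right_inv z hz⟩

theorem IsSmoothDiffeoOn.continuousOn (hd : IsSmoothDiffeoOn h hinv S S') :
    ContinuousOn h S := hd.smooth.continuousOn

/-- image of a subset of S described via hinv -/
theorem IsSmoothDiffeoOn.image_eq (hd : IsSmoothDiffeoOn h hinv S S') {W : Set (Euc d)}
    (hW : W ⊆ S) : h '' W = S' ∩ hinv ⁻¹' W := by
  ext z; constructor
  · rintro ⟨x, hxW, rfl⟩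
    exact ⟨hd.mapsTo (hW hxW), by rw [mem_preimage, hd.left_inv x (hW hxW)]; exact hxW⟩
  · rintro ⟨hz, hzW⟩
    exact ⟨hinv z, hzW, hd.right_inv z hz⟩

theorem IsSmoothDiffeoOn.image_open (hd : IsSmoothDiffeoOn h hinv S S') (hS' : IsOpen S')
    {W : Set (Euc d)} (hW : W ⊆ S) (hWo : IsOpen W) : IsOpen (h '' W) := by
  rw [hd.image_eq hW]
  exact hd.smooth_inv.continuousOn.isOpen_inter_preimage hS' hWo

theorem IsSmoothDiffeoOn.image_connected (hd : IsSmoothDiffeoOn h hinv S S')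
    {W : Set (Euc d)} (hW : W ⊆ S) (hWc : IsConnected W) : IsConnected (h '' W) :=
  hWc.image h (hd.continuousOn.mono hW)

theorem IsSmoothDiffeoOn.image_disjoint (hd : IsSmoothDiffeoOn h hinv S S')
    {W W' : Set (Euc d)} (hW : W ⊆ S) (hW' : W' ⊆ S) (hdisj : W ∩ W' = ∅) :
    h '' W ∩ h '' W' = ∅ := by
  rw [← hd.injOn.image_inter hW hW', hdisj, image_empty]

/-- S decomposes into Gamma, Pos, Neg. -/
theorem gamma_union_pos_neg (S : Set (Euc d)) (i : Fin d) (τ : ℝ) :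
    Gamma S i τ ∪ GammaPos S i τ ∪ GammaNeg S i τ = S := by
  ext z
  simp only [Gamma, GammaPos, GammaNeg, mem_union, mem_setOf_eq]
  constructor
  · rintro ((⟨hz, _⟩ | ⟨hz, _⟩) | ⟨hz, _⟩) <;> exact hz
  · intro hz
    rcases lt_trichotomy (z i) τ with hlt | heq | hgt
    · exact Or.inr ⟨hz, hlt⟩
    · exact Or.inl (Or.inl ⟨hz, heq⟩)
    · exact Or.inl (Or.inr ⟨hz, hgt⟩)

theorem gamma_subset (S : Set (Euc d)) (i : Fin d) (τ : ℝ) : Gamma S i τ ⊆ S :=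
  fun _ hz => hz.1

theorem gammaPos_subset (S : Set (Euc d)) (i : Fin d) (τ : ℝ) : GammaPos S i τ ⊆ S :=
  fun _ hz => hz.1

theorem gammaNeg_subset (S : Set (Euc d)) (i : Fin d) (τ : ℝ) : GammaNeg S i τ ⊆ S :=
  fun _ hz => hz.1

theorem gamma_inter_pos (S : Set (Euc d)) (i : Fin d) (τ : ℝ) :
    Gamma S i τ ∩ GammaPos S i τ = ∅ := by
  apply eq_empty_iff_forall_notMem.2
  rintro z ⟨⟨_, h1⟩, ⟨_, h2⟩⟩; exact absurd h1 (ne_of_gt h2)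

theorem gamma_inter_neg (S : Set (Euc d)) (i : Fin d) (τ : ℝ) :
    Gamma S i τ ∩ GammaNeg S i τ = ∅ := by
  apply eq_empty_iff_forall_notMem.2
  rintro z ⟨⟨_, h1⟩, ⟨_, h2⟩⟩; exact absurd h1 (ne_of_lt h2)

theorem pos_inter_neg (S : Set (Euc d)) (i : Fin d) (τ : ℝ) :
    GammaPos S i τ ∩ GammaNeg S i τ = ∅ := by
  apply eq_empty_iff_forall_notMem.2
  rintro z ⟨⟨_, h1⟩, ⟨_, h2⟩⟩; exact absurd h2 (not_lt.2 h1.le)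

theorem gammaPos_isOpen (hS : IsOpen S) (i : Fin d) (τ : ℝ) : IsOpen (GammaPos S i τ) := by
  have : GammaPos S i τ = S ∩ (fun z : Euc d => z i) ⁻¹' (Ioi τ) := rfl
  rw [this]
  exact hS.inter (isOpen_Ioi.preimage (PiLp.continuous_apply (p := 2) (β := fun _ : Fin d => ℝ) i))

theorem gammaNeg_isOpen (hS : IsOpen S) (i : Fin d) (τ : ℝ) : IsOpen (GammaNeg S i τ) := by
  have : GammaNeg S i τ = S ∩ (fun z : Euc d => z i) ⁻¹' (Iio τ) := rfl
  rw [this]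
  exact hS.inter (isOpen_Iio.preimage (PiLp.continuous_apply (p := 2) (β := fun _ : Fin d => ℝ) i))

/-- key elementary fact: perturbing one coordinate, staying in an open set. -/
theorem perturb_mem {U : Set (Euc d)} (hU : IsOpen U) {z : Euc d} (hz : z ∈ U) (j : Fin d) :
    ∃ s : ℝ, 0 < s ∧ ∀ r : ℝ, |r| ≤ s → z + EuclideanSpace.single j r ∈ U := by
  have hc : Continuous (fun s : ℝ => z + EuclideanSpace.single j s) := by
    have h2 : Continuous (fun s : ℝ => (EuclideanSpace.single j s : Euc d)) := by
      have h3 : (fun s : ℝ => (EuclideanSpace.single j s : Euc d)) =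
          fun s => s • (EuclideanSpace.single j (1:ℝ)) := by
        ext s m
        by_cases hm : m = j
        · subst hm; simp [EuclideanSpace.single_apply]
        · simp [EuclideanSpace.single_apply, hm]
      rw [h3]; exact (continuous_id.smul continuous_const)
    exact continuous_const.add h2
  have h0 : z + EuclideanSpace.single j (0:ℝ) = z := by
    have : (EuclideanSpace.single j (0:ℝ) : Euc d) = 0 := by
      ext m; by_cases hm : m = j <;> simp [EuclideanSpace.single_apply, hm]
    rw [this, add_zero]
  have hev : ∀ᶠ s : ℝ in nhds 0, z + EuclideanSpace.single j s ∈ U := by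
    have ht := hc.continuousAt (x := (0:ℝ))
    rw [ContinuousAt, h0] at ht
    exact ht (hU.mem_nhds hz)
  rcases Metric.eventually_nhds_iff.1 hev with ⟨ε, hε, hball⟩
  refine ⟨ε / 2, by linarith, fun r hr => ?_⟩
  apply hball
  rw [Real.dist_eq, sub_zero]
  calc |r| ≤ ε / 2 := hr
    _ < ε := by linarith

/-- A nonempty open subset cannot be contained in a coordinate hyperplane. -/
theorem open_not_subset_gamma {U : Set (Euc d)} (hU : IsOpen U) (hne : U.Nonempty)
    (j : Fin d) (b : ℝ) : ¬ (∀ z ∈ U, z j = b) := by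
  intro hall
  obtain ⟨z, hz⟩ := hne
  obtain ⟨s, hs, hmem⟩ := perturb_mem hU hz j
  have h1 := hall _ (hmem s (by rw [abs_of_pos hs]))
  have h2 := hall z hz
  rw [PiLp.add_apply, EuclideanSpace.single_apply, if_pos rfl, h2] at h1
  linarith

/-- Uniqueness of representation of a nonempty Gamma by (axis, value). -/
theorem gamma_rep_unique (hS' : IsOpen S') {j j' : Fin d} {b b' : ℝ}
    (hne : (Gamma S' j b).Nonempty) (heq : Gamma S' j b = Gamma S' j' b') :
    j = j' ∧ b = b' := by
  obtain ⟨z, hzS, hzj⟩ := hne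
  by_cases hjj : j = j'
  · subst hjj
    refine ⟨rfl, ?_⟩
    have hmem : z ∈ Gamma S' j b' := heq ▸ ⟨hzS, hzj⟩
    rw [← hzj, hmem.2]
  · exfalso
    obtain ⟨s, hs, hmem⟩ := perturb_mem hS' hzS j'
    have hz1 : z + EuclideanSpace.single j' s ∈ Gamma S' j b := by
      refine ⟨hmem s (by rw [abs_of_pos hs]), ?_⟩
      rw [PiLp.add_apply, EuclideanSpace.single_apply, if_neg hjj, hzj, add_zero]
    have hz2 : z + EuclideanSpace.single j' s ∈ Gamma S' j' b' := heq ▸ hz1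
    have hz' : z ∈ Gamma S' j' b' := heq ▸ (⟨hzS, hzj⟩ : z ∈ Gamma S' j b)
    have e1 := hz2.2
    have e2 := hz'.2
    rw [PiLp.add_apply, EuclideanSpace.single_apply, if_pos rfl, e2] at e1
    linarith

end Basics
section Absorb

variable {d : ℕ} {S S' : Set (Euc d)} {h hinv : Euc d → Euc d}

theorem absorb_aux (hS' : IsOpen S') {j : Fin d} {b : ℝ} {M P' N' : Set (Euc d)}
    (hcover : M ∪ P' ∪ N' = S')
    (hMP : M ∩ P' = ∅) (hMN : M ∩ N' = ∅) (hPN : P' ∩ N' = ∅)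
    (hP'o : IsOpen P') (hN'o : IsOpen N')
    (hsub : M ⊆ Gamma S' j b)
    (hpos : GammaPos S' j b ⊆ P') (hneg : GammaNeg S' j b ⊆ N') :
    M = Gamma S' j b ∧ P' = GammaPos S' j b ∧ N' = GammaNeg S' j b := by
  have hPS' : P' ⊆ S' := by rw [← hcover]; intro z hz; exact Or.inl (Or.inr hz)
  have hNS' : N' ⊆ S' := by rw [← hcover]; intro z hz; exact Or.inr hz
  have hGamM : Gamma S' j b ⊆ M := by
    intro z hz
    have hzS' : z ∈ S' := hz.1
    rw [← hcover] at hzS'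
    rcases hzS' with (hM | hP) | hN
    · exact hM
    · exfalso
      obtain ⟨s, hs, hmem⟩ := perturb_mem hP'o hP j
      have hz' : z + EuclideanSpace.single j (-s) ∈ P' := hmem (-s) (by rw [abs_neg, abs_of_pos hs])
      have hz'neg : z + EuclideanSpace.single j (-s) ∈ GammaNeg S' j b := by
        refine ⟨hPS' hz', ?_⟩
        rw [PiLp.add_apply, EuclideanSpace.single_apply, if_pos rfl, hz.2]
        linarith
      exact absurd (mem_inter hz' (hneg hz'neg)) (by rw [hPN]; exact notMem_empty _)
    · exfalso
      obtain ⟨s, hs, hmem⟩ := perturb_mem hN'o hN j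
      have hz' : z + EuclideanSpace.single j s ∈ N' := hmem s (by rw [abs_of_pos hs])
      have hz'pos : z + EuclideanSpace.single j s ∈ GammaPos S' j b := by
        refine ⟨hNS' hz', ?_⟩
        rw [PiLp.add_apply, EuclideanSpace.single_apply, if_pos rfl, hz.2]
        linarith
      exact absurd (mem_inter (hpos hz'pos) hz') (by rw [hPN]; exact notMem_empty _)
  have hMeq : M = Gamma S' j b := Subset.antisymm hsub hGamM
  refine ⟨hMeq, ?_, ?_⟩
  · refine Subset.antisymm ?_ hpos
    intro z hz
    have hzS' : z ∈ S' := hPS' hz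
    rcases lt_trichotomy (z j) b with hlt | heq | hgt
    · exact absurd (mem_inter (hneg ⟨hzS', hlt⟩) hz)
        (by rw [inter_comm, hPN]; exact notMem_empty _)
    · exact absurd (mem_inter (hGamM ⟨hzS', heq⟩) hz) (by rw [hMP]; exact notMem_empty _)
    · exact ⟨hzS', hgt⟩
  · refine Subset.antisymm ?_ hneg
    intro z hz
    have hzS' : z ∈ S' := hNS' hz
    rcases lt_trichotomy (z j) b with hlt | heq | hgt
    · exact ⟨hzS', hlt⟩
    · exact absurd (mem_inter (hGamM ⟨hzS', heq⟩) hz) (by rw [hMN]; exact notMem_empty _)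
    · exact absurd (mem_inter (hpos ⟨hzS', hgt⟩) hz) (by rw [hPN]; exact notMem_empty _)

/-- Main absorption lemma: if the image of an axis separator is contained in an axis
separator of `S'`, then it equals it, and the halves correspond (possibly swapped). -/
theorem absorb (hS : IsOpen S) (hS' : IsOpen S') (hd : IsSmoothDiffeoOn h hinv S S')
    {i : Fin d} {a : ℝ} (hsep : IsAxisSeparator S i a)
    {j : Fin d} {b : ℝ} (hsep' : IsAxisSeparator S' j b)
    (hsub : h '' Gamma S i a ⊆ Gamma S' j b) :
    h '' Gamma S i a = Gamma S' j b ∧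
      ((h '' GammaNeg S i a = GammaNeg S' j b ∧ h '' GammaPos S i a = GammaPos S' j b) ∨
       (h '' GammaNeg S i a = GammaPos S' j b ∧ h '' GammaPos S i a = GammaNeg S' j b)) := by
  set M := h '' Gamma S i a with hM
  set P' := h '' GammaPos S i a with hP'
  set N' := h '' GammaNeg S i a with hN'
  have hcover : M ∪ P' ∪ N' = S' := by
    rw [hM, hP', hN', ← image_union, ← image_union, gamma_union_pos_neg, hd.image_S]
  have hMP : M ∩ P' = ∅ :=
    hd.image_disjoint (gamma_subset S i a) (gammaPos_subset S i a) (gamma_inter_pos S i a)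
  have hMN : M ∩ N' = ∅ :=
    hd.image_disjoint (gamma_subset S i a) (gammaNeg_subset S i a) (gamma_inter_neg S i a)
  have hPN : P' ∩ N' = ∅ :=
    hd.image_disjoint (gammaPos_subset S i a) (gammaNeg_subset S i a) (pos_inter_neg S i a)
  have hP'o : IsOpen P' := hd.image_open hS' (gammaPos_subset S i a) (gammaPos_isOpen hS i a)
  have hN'o : IsOpen N' := hd.image_open hS' (gammaNeg_subset S i a) (gammaNeg_isOpen hS i a)
  have hP'c : IsConnected P' := hd.image_connected (gammaPos_subset S i a) hsep.2.1
  have hN'c : IsConnected N' := hd.image_connected (gammaNeg_subset S i a) hsep.2.2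
  have hdisjPN : Disjoint P' N' := disjoint_iff_inter_eq_empty.2 hPN
  -- the positive B-half avoids M and is contained in P' ∪ N'
  have hposDisj : ∀ z ∈ GammaPos S' j b, z ∉ M := by
    intro z hz hzM
    have := (hsub hzM).2
    exact absurd this (ne_of_gt hz.2)
  have hnegDisj : ∀ z ∈ GammaNeg S' j b, z ∉ M := by
    intro z hz hzM
    have := (hsub hzM).2
    exact absurd this (ne_of_lt hz.2)
  have hposSub : GammaPos S' j b ⊆ P' ∪ N' := by
    intro z hz
    have hzS' : z ∈ S' := hz.1
    rw [← hcover] at hzS'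
    rcases hzS' with (hMm | hP) | hN
    · exact absurd hMm (hposDisj z hz)
    · exact Or.inl hP
    · exact Or.inr hN
  have hnegSub : GammaNeg S' j b ⊆ P' ∪ N' := by
    intro z hz
    have hzS' : z ∈ S' := hz.1
    rw [← hcover] at hzS'
    rcases hzS' with (hMm | hP) | hN
    · exact absurd hMm (hnegDisj z hz)
    · exact Or.inl hP
    · exact Or.inr hN
  have hposOr := hsep'.2.1.isPreconnected.subset_or_subset hP'o hN'o hdisjPN hposSub
  have hnegOr := hsep'.2.2.isPreconnected.subset_or_subset hP'o hN'o hdisjPN hnegSub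
  -- rule out both halves inside the same piece
  have hnotsame : ∀ W : Set (Euc d), IsOpen W → W.Nonempty → W ⊆ S' →
      GammaPos S' j b ∩ W = ∅ → GammaNeg S' j b ∩ W = ∅ → W ∩ M = ∅ → False := by
    intro W hWo hWne hWS hWP hWN hWM
    apply open_not_subset_gamma hWo hWne j b
    intro z hzW
    have hzS' : z ∈ S' := hWS hzW
    rcases lt_trichotomy (z j) b with hlt | heq | hgt
    · have hzn : z ∈ GammaNeg S' j b := ⟨hzS', hlt⟩
      exact absurd (mem_inter hzn hzW) (by rw [hWN]; exact notMem_empty _)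
    · exact heq
    · have hzp : z ∈ GammaPos S' j b := ⟨hzS', hgt⟩
      exact absurd (mem_inter hzp hzW) (by rw [hWP]; exact notMem_empty _)
  rcases hposOr with hPos | hPos <;> rcases hnegOr with hNeg | hNeg
  · -- both in P' : N' violates
    exfalso
    refine hnotsame N' hN'o hN'c.nonempty (by rw [← hcover]; intro z hz; exact Or.inr hz) ?_ ?_
      (by rw [inter_comm]; exact hMN)
    · apply eq_empty_iff_forall_notMem.2
      rintro z ⟨hz1, hz2⟩
      exact absurd (mem_inter (hPos hz1) hz2) (by rw [hPN]; exact notMem_empty _)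
    · apply eq_empty_iff_forall_notMem.2
      rintro z ⟨hz1, hz2⟩
      exact absurd (mem_inter (hNeg hz1) hz2) (by rw [hPN]; exact notMem_empty _)
  · -- Pos ⊆ P', Neg ⊆ N' : the straight case
    obtain ⟨h1, h2, h3⟩ := absorb_aux hS' hcover hMP hMN hPN hP'o hN'o hsub hPos hNeg
    exact ⟨h1, Or.inl ⟨h3, h2⟩⟩
  · -- Pos ⊆ N', Neg ⊆ P' : the swapped case
    have hcover' : M ∪ N' ∪ P' = S' := by
      rw [← hcover]; ext z;
      simp only [mem_union]; tauto
    obtain ⟨h1, h2, h3⟩ := absorb_aux hS' hcover' hMN hMP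
      (by rw [inter_comm]; exact hPN) hN'o hP'o hsub hPos hNeg
    exact ⟨h1, Or.inr ⟨h2, h3⟩⟩
  · -- both in N' : P' violates
    exfalso
    refine hnotsame P' hP'o hP'c.nonempty
      (by rw [← hcover]; intro z hz; exact Or.inl (Or.inr hz)) ?_ ?_
      (by rw [inter_comm]; exact hMP)
    · apply eq_empty_iff_forall_notMem.2
      rintro z ⟨hz1, hz2⟩
      exact absurd (mem_inter hz2 (hPos hz1)) (by rw [hPN]; exact notMem_empty _)
    · apply eq_empty_iff_forall_notMem.2
      rintro z ⟨hz1, hz2⟩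
      exact absurd (mem_inter hz2 (hNeg hz1)) (by rw [hPN]; exact notMem_empty _)

end Absorb
section Core

variable {d : ℕ} {S S' : Set (Euc d)} {h hinv : Euc d → Euc d}

theorem diffeo_hasFDerivAt (hS : IsOpen S) (hd : IsSmoothDiffeoOn h hinv S S') {x : Euc d}
    (hx : x ∈ S) : HasFDerivAt h (fderiv ℝ h x) x :=
  ((hd.smooth.differentiableOn (by simp)).differentiableAt
    (hS.mem_nhds hx)).hasFDerivAt

theorem diffeo_fderiv_surj (hS : IsOpen S) (hS' : IsOpen S') (hd : IsSmoothDiffeoOn h hinv S S')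
    {x : Euc d} (hx : x ∈ S) : Function.Surjective (fderiv ℝ h x) := by
  have hyS' : h x ∈ S' := hd.mapsTo hx
  have hinvy : hinv (h x) = x := hd.left_inv x hx
  have hBder : HasFDerivAt hinv (fderiv ℝ hinv (h x)) (h x) :=
    diffeo_hasFDerivAt hS' hd.symm hyS'
  have hAder : HasFDerivAt h (fderiv ℝ h x) (hinv (h x)) := by
    rw [hinvy]; exact diffeo_hasFDerivAt hS hd hx
  have hcomp : HasFDerivAt (h ∘ hinv) ((fderiv ℝ h x) ∘L (fderiv ℝ hinv (h x))) (h x) :=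
    hAder.comp (h x) hBder
  have hid : HasFDerivAt (h ∘ hinv) (ContinuousLinearMap.id ℝ (Euc d)) (h x) := by
    have hev : (h ∘ hinv) =ᶠ[nhds (h x)] id := by
      filter_upwards [hS'.mem_nhds hyS'] with z hz
      exact hd.right_inv z hz
    exact (hasFDerivAt_id (h x)).congr_of_eventuallyEq hev
  have huniq := hcomp.unique hid
  intro u
  refine ⟨fderiv ℝ hinv (h x) u, ?_⟩
  have := congrArg (fun L : Euc d →L[ℝ] Euc d => L u) huniq
  simpa using this

theorem vanish_decomp (L : Euc d →L[ℝ] Euc d) (i j : Fin d)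
    (hv : ∀ v : Euc d, v i = 0 → L v j = 0) (v : Euc d) :
    L v j = v i * L (EuclideanSpace.single i 1) j := by
  have hw : (v - v i • EuclideanSpace.single i (1:ℝ)) i = 0 := by
    simp [PiLp.sub_apply, PiLp.smul_apply, EuclideanSpace.single_apply]
  have h0 := hv _ hw
  have hvv : v = (v - v i • EuclideanSpace.single i (1:ℝ)) + v i • EuclideanSpace.single i 1 := by
    abel
  calc L v j = L ((v - v i • EuclideanSpace.single i (1:ℝ)) + v i • EuclideanSpace.single i 1) j := by
        rw [← hvv]
    _ = L (v - v i • EuclideanSpace.single i (1:ℝ)) j + v i * L (EuclideanSpace.single i 1) j := by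
        rw [map_add, L.map_smul]
        simp [PiLp.add_apply, PiLp.smul_apply]
    _ = v i * L (EuclideanSpace.single i 1) j := by rw [h0, zero_add]

theorem two_axes {A : Euc d →L[ℝ] Euc d} (hsurj : Function.Surjective A) {i j j' : Fin d}
    (hjj : j ≠ j') (hv : ∀ v : Euc d, v i = 0 → A v j = 0)
    (hv' : ∀ v : Euc d, v i = 0 → A v j' = 0) : False := by
  obtain ⟨w, hw⟩ := hsurj (EuclideanSpace.single j 1)
  obtain ⟨w', hw'⟩ := hsurj (EuclideanSpace.single j' 1)
  have h1 : A w j = 1 := by rw [hw]; simp [EuclideanSpace.single_apply]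
  have h2 : A w j' = 0 := by
    rw [hw]; simp [EuclideanSpace.single_apply, Ne.symm hjj]
  have h3 : A w' j' = 1 := by rw [hw']; simp [EuclideanSpace.single_apply]
  rw [vanish_decomp A i j hv w] at h1
  rw [vanish_decomp A i j' hv' w] at h2
  rw [vanish_decomp A i j' hv' w'] at h3
  have hwi : w i ≠ 0 := by
    intro h0; rw [h0, zero_mul] at h1; norm_num at h1
  have hc' : A (EuclideanSpace.single i 1) j' = 0 := by
    rcases mul_eq_zero.1 h2 with hh | hh
    · exact absurd hh hwi
    · exact hh
  rw [hc', mul_zero] at h3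
  norm_num at h3

theorem line_tendsto (z v : Euc d) :
    Filter.Tendsto (fun s : ℝ => z + s • v) (nhds 0) (nhds z) := by
  have hc : Continuous fun s : ℝ => z + s • v := by continuity
  have h0 : z + (0:ℝ) • v = z := by simp
  have := hc.continuousAt (x := (0:ℝ))
  rwa [ContinuousAt, h0] at this

theorem line_coord (z v : Euc d) (s : ℝ) (i : Fin d) : (z + s • v) i = z i + s * v i := by
  simp [PiLp.add_apply, PiLp.smul_apply]

theorem deriv_along (hS : IsOpen S) (hd : IsSmoothDiffeoOn h hinv S S') {x : Euc d} (hx : x ∈ S)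
    (v : Euc d) (j : Fin d) :
    HasDerivAt (fun s : ℝ => h (x + s • v) j) ((fderiv ℝ h x v) j) 0 := by
  have hG : HasDerivAt (fun s : ℝ => x + s • v) v 0 := by
    have := ((hasDerivAt_id (0:ℝ)).smul_const v).const_add x
    simpa using this
  have hd1 : HasFDerivAt h (fderiv ℝ h x) ((fun s : ℝ => x + s • v) 0) := by
    rw [show (fun s : ℝ => x + s • v) 0 = x by simp]
    exact diffeo_hasFDerivAt hS hd hx
  have hF : HasDerivAt (fun s : ℝ => h (x + s • v)) (fderiv ℝ h x v) 0 :=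
    hd1.comp_hasDerivAt 0 hG
  have := (EuclideanSpace.proj j (𝕜 := ℝ)).hasFDerivAt.comp_hasDerivAt 0 hF
  exact this

theorem const_along_of (hS : IsOpen S) (hd : IsSmoothDiffeoOn h hinv S S') {z v : Euc d}
    (hz : z ∈ S) {j : Fin d} {b : ℝ}
    (hc : ∀ᶠ s : ℝ in nhds 0, h (z + s • v) j = b) : (fderiv ℝ h z v) j = 0 := by
  have hder := deriv_along hS hd hz v j
  have hzero : HasDerivAt (fun s : ℝ => h (z + s • v) j) 0 0 :=
    (hasDerivAt_const (0:ℝ) b).congr_of_eventuallyEq hc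
  exact hder.unique hzero

theorem contAt_coord (hS : IsOpen S) (hd : IsSmoothDiffeoOn h hinv S S') {z : Euc d}
    (hz : z ∈ S) (j : Fin d) : ContinuousAt (fun w => h w j) z :=
  (PiLp.continuous_apply (p := 2) (β := fun _ : Fin d => ℝ) j).continuousAt.comp (hd.continuousOn.continuousAt (hS.mem_nhds hz))

/-- local sheet property: near `x`, the image under `h` of the separator piece lies in the
hyperplane `{w j = b}`. -/
def LocSheet (h : Euc d → Euc d) (S : Set (Euc d)) (i : Fin d) (a : ℝ) (x : Euc d)
    (j : Fin d) (b : ℝ) : Prop :=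
  ∃ ε > 0, ∀ z ∈ S, z i = a → dist z x < ε → h z j = b

theorem locSheet_vanish (hS : IsOpen S) (hd : IsSmoothDiffeoOn h hinv S S') {x : Euc d}
    {i : Fin d} {a : ℝ} (hx : x ∈ S) (hxi : x i = a) {j : Fin d} {b : ℝ}
    (hloc : LocSheet h S i a x j b) (v : Euc d) (hvi : v i = 0) :
    (fderiv ℝ h x v) j = 0 := by
  obtain ⟨ε, hε, hloc⟩ := hloc
  apply const_along_of hS hd hx
  have h1 : ∀ᶠ s : ℝ in nhds 0, x + s • v ∈ S := (line_tendsto x v) (hS.mem_nhds hx)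
  have h2 : ∀ᶠ s : ℝ in nhds 0, dist (x + s • v) x < ε := by
    have hball : ∀ᶠ s : ℝ in nhds 0, (x + s • v) ∈ Metric.ball x ε :=
      (line_tendsto x v) (Metric.ball_mem_nhds x hε)
    exact hball.mono fun s hs => Metric.mem_ball.1 hs
  filter_upwards [h1, h2] with s hs1 hs2
  exact hloc _ hs1 (by rw [line_coord, hvi, mul_zero, add_zero, hxi]) hs2

theorem locSheet_unique (hS : IsOpen S) (hS' : IsOpen S') (hd : IsSmoothDiffeoOn h hinv S S')
    {x : Euc d} {i : Fin d} {a : ℝ} (hx : x ∈ S) (hxi : x i = a) {j j' : Fin d} {b b' : ℝ}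
    (h1 : LocSheet h S i a x j b) (h2 : LocSheet h S i a x j' b') (hjj : j ≠ j') : False :=
  two_axes (diffeo_fderiv_surj hS hS' hd hx) hjj
    (fun v hv => locSheet_vanish hS hd hx hxi h1 v hv)
    (fun v hv => locSheet_vanish hS hd hx hxi h2 v hv)

theorem mem_grid_iff {z : Euc d} (CB : DiscreteCoordination S') :
    z ∈ CB.grid ↔ ∃ t : (j : Fin d) × Fin (CB.n j), z ∈ S' ∧ z t.1 = CB.A t.1 t.2 := by
  constructor
  · intro hz
    rcases mem_iUnion.1 hz with ⟨jj, hz⟩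
    rcases mem_iUnion.1 hz with ⟨kk, hz⟩
    exact ⟨⟨jj, kk⟩, hz.1, hz.2⟩
  · rintro ⟨t, h1, h2⟩
    exact mem_iUnion.2 ⟨t.1, mem_iUnion.2 ⟨t.2, h1, h2⟩⟩

end Core
section Core2

variable {d : ℕ} {S S' : Set (Euc d)} {h hinv : Euc d → Euc d}

theorem locSheet_exists (hS : IsOpen S) (hS' : IsOpen S') (hd : IsSmoothDiffeoOn h hinv S S')
    (CB : DiscreteCoordination S') {i : Fin d} {a : ℝ}
    (himg : ∀ z ∈ Gamma S i a, h z ∈ CB.grid)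
    {x : Euc d} (hx : x ∈ Gamma S i a) :
    ∃ t : (j : Fin d) × Fin (CB.n j), LocSheet h S i a x t.1 (CB.A t.1 t.2) := by
  classical
  obtain ⟨hxS, hxi⟩ := hx
  set Jp : ((j : Fin d) × Fin (CB.n j)) → Prop := fun t => h x t.1 = CB.A t.1 t.2 with hJp
  set Goodp : ((j : Fin d) × Fin (CB.n j)) → Prop :=
    fun t => Jp t ∧ ∀ v : Euc d, v i = 0 → (fderiv ℝ h x v) t.1 = 0 with hGoodp
  set Badp : ((j : Fin d) × Fin (CB.n j)) → Prop := fun t => Jp t ∧ ¬ Goodp t with hBadp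
  -- witness direction for bad indices
  have badwit : ∀ t, Badp t → ∃ v : Euc d, v i = 0 ∧ (fderiv ℝ h x v) t.1 ≠ 0 := by
    intro t ht
    by_contra hcon
    push_neg at hcon
    exact ht.2 ⟨ht.1, hcon⟩
  set vv : ((j : Fin d) × Fin (CB.n j)) → Euc d :=
    fun t => if ht : Badp t then (badwit t ht).choose else 0 with hvv
  have vvspec : ∀ t (ht : Badp t), (vv t) i = 0 ∧ (fderiv ℝ h x (vv t)) t.1 ≠ 0 := by
    intro t ht
    simp only [hvv, dif_pos ht]
    exact (badwit t ht).choose_spec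
  -- a good ball around x
  have hev : ∀ᶠ z in nhds x, z ∈ S ∧
      (∀ t : (j : Fin d) × Fin (CB.n j), ¬ Jp t → h z t.1 ≠ CB.A t.1 t.2) ∧
      (∀ t : (j : Fin d) × Fin (CB.n j), Badp t → (fderiv ℝ h z (vv t)) t.1 ≠ 0) := by
    refine (hS.eventually_mem hxS).and ((Filter.eventually_all.2 ?_).and
      (Filter.eventually_all.2 ?_))
    · intro t
      by_cases ht : Jp t
      · exact Filter.Eventually.of_forall fun z hz => absurd ht hz
      · have hca : ContinuousAt (fun w => h w t.1) x := contAt_coord hS hd hxS t.1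
        have := hca.eventually_ne ht
        exact this.mono fun z hz hnt => hz
    · intro t
      by_cases ht : Badp t
      · have hfc : ContinuousAt (fderiv ℝ h) x :=
          (hd.smooth.continuousOn_fderiv_of_isOpen hS (by exact_mod_cast le_top)).continuousAt
            (hS.mem_nhds hxS)
        have hca : ContinuousAt (fun z => (fderiv ℝ h z (vv t)) t.1) x := by
          exact (PiLp.continuous_apply (p := 2) (β := fun _ : Fin d => ℝ) t.1).continuousAt.comp
            (((ContinuousLinearMap.apply ℝ (Euc d) (vv t)).continuous.continuousAt).comp hfc)
        have := hca.eventually_ne (vvspec t ht).2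
        exact this.mono fun z hz hnt => hz
      · exact Filter.Eventually.of_forall fun z hz => absurd hz ht
  rcases Metric.eventually_nhds_iff.1 hev with ⟨ε, hε, hball⟩
  -- density of non-membership in a bad sheet
  have density : ∀ t, Badp t → ∀ z, dist z x < ε → z i = a → ∀ δ > 0,
      ∃ z', dist z' x < ε ∧ z' i = a ∧ dist z' z < δ ∧ h z' t.1 ≠ CB.A t.1 t.2 := by
    intro t ht z hzx hzi δ hδ
    have hzS : z ∈ S := (hball hzx).1
    by_cases hne : h z t.1 = CB.A t.1 t.2
    · set v := vv t with hv
      have hvi0 : v i = 0 := (vvspec t ht).1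
      have hDz : (fderiv ℝ h z v) t.1 ≠ 0 := (hball hzx).2.2 t ht
      by_contra hcon
      push_neg at hcon
      apply hDz
      apply const_along_of hS hd hzS
      have h1 : ∀ᶠ s : ℝ in nhds 0, (z + s • v) ∈ Metric.ball x ε :=
        (line_tendsto z v) (Metric.isOpen_ball.mem_nhds (Metric.mem_ball.2 hzx))
      have h2 : ∀ᶠ s : ℝ in nhds 0, (z + s • v) ∈ Metric.ball z δ :=
        (line_tendsto z v) (Metric.ball_mem_nhds z hδ)
      filter_upwards [h1, h2] with s hs1 hs2
      exact hcon _ (Metric.mem_ball.1 hs1)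
        (by rw [line_coord, hvi0, mul_zero, add_zero, hzi]) (Metric.mem_ball.1 hs2)
    · exact ⟨z, hzx, hzi, by simpa using hδ, hne⟩
  -- recursive density over a finite set of bad sheets
  have recd : ∀ T : Finset ((j : Fin d) × Fin (CB.n j)), (∀ t ∈ T, Badp t) →
      ∀ z, dist z x < ε → z i = a → ∀ δ > 0,
      ∃ z', dist z' x < ε ∧ z' i = a ∧ dist z' z < δ ∧
        ∀ t ∈ T, h z' t.1 ≠ CB.A t.1 t.2 := by
    intro T
    induction T using Finset.induction_on with
    | empty =>
      intro _ z hzx hzi δ hδ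
      exact ⟨z, hzx, hzi, by simpa using hδ, by simp⟩
    | @insert t T htT ih =>
      intro hT z hzx hzi δ hδ
      obtain ⟨z1, hz1x, hz1i, hz1z, hz1t⟩ :=
        density t (hT t (Finset.mem_insert_self t T)) z hzx hzi (δ/2) (by linarith)
      have hz1S : z1 ∈ S := (hball hz1x).1
      have hca : ContinuousAt (fun w => h w t.1) z1 := contAt_coord hS hd hz1S t.1
      rcases Metric.eventually_nhds_iff.1 (hca.eventually_ne hz1t) with ⟨ρ, hρ, hρball⟩
      obtain ⟨z', hz'x, hz'i, hz'z1, hz'T⟩ :=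
        ih (fun t' ht' => hT t' (Finset.mem_insert_of_mem ht')) z1 hz1x hz1i
          (min ρ (δ/2)) (lt_min hρ (by linarith))
      refine ⟨z', hz'x, hz'i, ?_, ?_⟩
      · calc dist z' z ≤ dist z' z1 + dist z1 z := dist_triangle z' z1 z
          _ < δ/2 + δ/2 := add_lt_add (lt_of_lt_of_le hz'z1 (min_le_right _ _)) hz1z
          _ = δ := by ring
      · intro t' ht'
        rcases Finset.mem_insert.1 ht' with rfl | ht'
        · exact hρball (lt_of_lt_of_le hz'z1 (min_le_left _ _))
        · exact hz'T t' ht'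
  set BadF : Finset ((j : Fin d) × Fin (CB.n j)) := Finset.univ.filter Badp with hBadF
  have hBadFspec : ∀ t ∈ BadF, Badp t := fun t ht => (Finset.mem_filter.1 ht).2
  -- find a good sheet
  obtain ⟨z0, hz0x, hz0i, _, hz0T⟩ := recd BadF hBadFspec x (by simpa using hε) hxi 1 one_pos
  have hz0S : z0 ∈ S := (hball hz0x).1
  have hz0grid := himg z0 ⟨hz0S, hz0i⟩
  rcases (mem_grid_iff CB).1 hz0grid with ⟨t0, _, ht0eq⟩
  have hJ0 : Jp t0 := by
    by_contra hc
    exact (hball hz0x).2.1 t0 hc ht0eq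
  have hGood0 : Goodp t0 := by
    by_contra hc
    exact hz0T t0 (Finset.mem_filter.2 ⟨Finset.mem_univ _, ⟨hJ0, hc⟩⟩) ht0eq
  -- uniqueness of good sheets
  have hGoodUnique : ∀ t t', Goodp t → Goodp t' → t = t' := by
    rintro ⟨j, k⟩ ⟨j', k'⟩ hg hg'
    by_cases hjj : j = j'
    · subst hjj
      have : CB.A j k = CB.A j k' := by rw [← hg.1, ← hg'.1]
      have := (CB.mono j).injective this
      subst this
      rfl
    · exact absurd (two_axes (diffeo_fderiv_surj hS hS' hd hxS) hjj hg.2 hg'.2) not_false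
  -- conclude : t0 is a local sheet at x
  refine ⟨t0, ε, hε, ?_⟩
  intro z hzS hzi hzx
  by_contra hne
  have hca : ContinuousAt (fun w => h w t0.1) z := contAt_coord hS hd hzS t0.1
  rcases Metric.eventually_nhds_iff.1 (hca.eventually_ne hne) with ⟨ρ, hρ, hρball⟩
  obtain ⟨z', hz'x, hz'i, hz'z, hz'T⟩ := recd BadF hBadFspec z hzx hzi ρ hρ
  have hz'S : z' ∈ S := (hball hz'x).1
  have hz'grid := himg z' ⟨hz'S, hz'i⟩
  rcases (mem_grid_iff CB).1 hz'grid with ⟨t1, _, ht1eq⟩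
  have hJ1 : Jp t1 := by
    by_contra hc
    exact (hball hz'x).2.1 t1 hc ht1eq
  have hGood1 : Goodp t1 := by
    by_contra hc
    exact hz'T t1 (Finset.mem_filter.2 ⟨Finset.mem_univ _, ⟨hJ1, hc⟩⟩) ht1eq
  have ht10 : t1 = t0 := hGoodUnique t1 t0 hGood1 hGood0
  rw [ht10] at ht1eq
  exact hρball hz'z ht1eq

end Core2
section Core3

variable {d : ℕ} {S S' : Set (Euc d)} {h hinv : Euc d → Euc d}

theorem sheet_global (hS : IsOpen S) (hS' : IsOpen S') (hd : IsSmoothDiffeoOn h hinv S S')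
    (CB : DiscreteCoordination S') {i : Fin d} {a : ℝ} (hsep : IsAxisSeparator S i a)
    (himg : ∀ z ∈ Gamma S i a, h z ∈ CB.grid) :
    ∃ t : (j : Fin d) × Fin (CB.n j), ∀ z ∈ Gamma S i a, h z t.1 = CB.A t.1 t.2 := by
  classical
  set Γ := Gamma S i a with hΓ
  have key : ∀ x, x ∈ Γ → ∃ t : (j : Fin d) × Fin (CB.n j),
      LocSheet h S i a x t.1 (CB.A t.1 t.2) := fun x hx => locSheet_exists hS hS' hd CB himg hx
  -- uniqueness of the local sheet at a point of Γ
  have uniq : ∀ x, x ∈ Γ → ∀ t t' : (j : Fin d) × Fin (CB.n j),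
      LocSheet h S i a x t.1 (CB.A t.1 t.2) → LocSheet h S i a x t'.1 (CB.A t'.1 t'.2) →
      t = t' := by
    rintro x hx ⟨j, k⟩ ⟨j', k'⟩ h1 h2
    by_cases hjj : j = j'
    · subst hjj
      obtain ⟨ε1, hε1, hs1⟩ := h1
      obtain ⟨ε2, hε2, hs2⟩ := h2
      have e1 := hs1 x hx.1 hx.2 (by simpa using hε1)
      have e2 := hs2 x hx.1 hx.2 (by simpa using hε2)
      have : CB.A j k = CB.A j k' := by rw [← e1, ← e2]
      have := (CB.mono j).injective this
      subst this
      rfl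
    · exact absurd (locSheet_unique hS hS' hd hx.1 hx.2 h1 h2 hjj) not_false
  set tdef : (j : Fin d) × Fin (CB.n j) := ⟨i, ⟨0, CB.n_pos i⟩⟩ with htdef
  have key' : ∀ x : Euc d, ∃ t : (j : Fin d) × Fin (CB.n j),
      x ∈ Γ → LocSheet h S i a x t.1 (CB.A t.1 t.2) := by
    intro x
    by_cases hx : x ∈ Γ
    · exact ⟨(key x hx).choose, fun _ => (key x hx).choose_spec⟩
    · exact ⟨tdef, fun hx' => absurd hx' hx⟩
  choose tfun tspec' using key'
  have key2 : ∀ x : Euc d, ∃ r : ℝ, 0 < r ∧ (x ∈ Γ →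
      ∀ z ∈ S, z i = a → dist z x < r → h z (tfun x).1 = CB.A (tfun x).1 (tfun x).2) := by
    intro x
    by_cases hx : x ∈ Γ
    · obtain ⟨ε, hε, hs⟩ := tspec' x hx
      exact ⟨ε, hε, fun _ => hs⟩
    · exact ⟨1, one_pos, fun hx' => absurd hx' hx⟩
  choose rfun rpos rspec' using key2
  have rspec : ∀ x, x ∈ Γ → 0 < rfun x ∧
      ∀ z ∈ S, z i = a → dist z x < rfun x → h z (tfun x).1 = CB.A (tfun x).1 (tfun x).2 :=
    fun x hx => ⟨rpos x, rspec' x hx⟩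
  -- the local sheet near a point: shifting centers
  have shift : ∀ x (hx : x ∈ Γ) (z : Euc d), dist z x < rfun x / 2 →
      LocSheet h S i a z (tfun x).1 (CB.A (tfun x).1 (tfun x).2) := by
    intro x hx z hzx
    refine ⟨rfun x / 2, by linarith [(rspec x hx).1], ?_⟩
    intro w hwS hwi hwz
    apply (rspec x hx).2 w hwS hwi
    calc dist w x ≤ dist w z + dist z x := dist_triangle w z x
      _ < rfun x / 2 + rfun x / 2 := add_lt_add hwz hzx
      _ = rfun x := by ring
  obtain ⟨x0, hx0⟩ := hsep.1.nonempty
  set t0 := tfun x0 with ht0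
  refine ⟨t0, ?_⟩
  set u : Set (Euc d) := ⋃ (x : Euc d) (_ : x ∈ Γ ∧ tfun x = t0), Metric.ball x (rfun x / 2)
    with hu
  set v : Set (Euc d) := ⋃ (x : Euc d) (_ : x ∈ Γ ∧ tfun x ≠ t0), Metric.ball x (rfun x / 2)
    with hv
  have huo : IsOpen u := isOpen_iUnion fun x => isOpen_iUnion fun _ => Metric.isOpen_ball
  have hvo : IsOpen v := isOpen_iUnion fun x => isOpen_iUnion fun _ => Metric.isOpen_ball
  have hcover : Γ ⊆ u ∪ v := by
    intro z hz
    have hzb : z ∈ Metric.ball z (rfun z / 2) :=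
      Metric.mem_ball_self (by linarith [(rspec z hz).1])
    by_cases hzt : tfun z = t0
    · exact Or.inl (mem_iUnion.2 ⟨z, mem_iUnion.2 ⟨⟨hz, hzt⟩, hzb⟩⟩)
    · exact Or.inr (mem_iUnion.2 ⟨z, mem_iUnion.2 ⟨⟨hz, hzt⟩, hzb⟩⟩)
  have hdisj : Γ ∩ (u ∩ v) = ∅ := by
    apply eq_empty_iff_forall_notMem.2
    rintro z ⟨hzΓ, hzu, hzv⟩
    rcases mem_iUnion.1 hzu with ⟨x, hx⟩
    rcases mem_iUnion.1 hx with ⟨⟨hxΓ, hxt⟩, hzx⟩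
    rcases mem_iUnion.1 hzv with ⟨y, hy⟩
    rcases mem_iUnion.1 hy with ⟨⟨hyΓ, hyt⟩, hzy⟩
    have l1 := shift x hxΓ z (Metric.mem_ball.1 hzx)
    have l2 := shift y hyΓ z (Metric.mem_ball.1 hzy)
    have := uniq z hzΓ (tfun x) (tfun y) l1 l2
    rw [hxt] at this
    exact hyt this.symm
  have hΓv : Γ ∩ v = ∅ := by
    by_contra hc
    have hne : (Γ ∩ v).Nonempty := nonempty_iff_ne_empty.2 hc
    have hneu : (Γ ∩ u).Nonempty := by
      refine ⟨x0, hx0, ?_⟩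
      exact mem_iUnion.2 ⟨x0, mem_iUnion.2 ⟨⟨hx0, rfl⟩,
        Metric.mem_ball_self (by linarith [(rspec x0 hx0).1])⟩⟩
    obtain ⟨z, hz⟩ := hsep.1.isPreconnected u v huo hvo hcover hneu hne
    exact absurd hz (by rw [hdisj] at *; exact notMem_empty z)
  intro z hz
  have hzuv := hcover hz
  have hzu : z ∈ u := by
    rcases hzuv with hzu | hzv
    · exact hzu
    · exact absurd (mem_inter hz hzv) (by rw [hΓv]; exact notMem_empty z)
  rcases mem_iUnion.1 hzu with ⟨x, hx⟩
  rcases mem_iUnion.1 hx with ⟨⟨hxΓ, hxt⟩, hzx⟩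
  have := (rspec x hxΓ).2 z hz.1 hz.2
    (lt_trans (Metric.mem_ball.1 hzx) (by linarith [(rspec x hxΓ).1]))
  rw [hxt] at this
  exact this

/-- The image of an axis separator of the coordination CA is exactly an axis separator of CB,
with halves matching. -/
theorem separator_image (hS : IsOpen S) (hS' : IsOpen S') (hd : IsSmoothDiffeoOn h hinv S S')
    (CB : DiscreteCoordination S') {i : Fin d} {a : ℝ} (hsep : IsAxisSeparator S i a)
    (himg : ∀ z ∈ Gamma S i a, h z ∈ CB.grid) :
    ∃ t : (j : Fin d) × Fin (CB.n j),
      h '' Gamma S i a = Gamma S' t.1 (CB.A t.1 t.2) ∧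
      ((h '' GammaNeg S i a = GammaNeg S' t.1 (CB.A t.1 t.2) ∧
        h '' GammaPos S i a = GammaPos S' t.1 (CB.A t.1 t.2)) ∨
       (h '' GammaNeg S i a = GammaPos S' t.1 (CB.A t.1 t.2) ∧
        h '' GammaPos S i a = GammaNeg S' t.1 (CB.A t.1 t.2))) := by
  obtain ⟨t, ht⟩ := sheet_global hS hS' hd CB hsep himg
  have hsub : h '' Gamma S i a ⊆ Gamma S' t.1 (CB.A t.1 t.2) := by
    rintro z' ⟨z, hz, rfl⟩
    exact ⟨hd.mapsTo hz.1, ht z hz⟩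
  obtain ⟨h1, h2⟩ := absorb hS hS' hd hsep (CB.sep t.1 t.2) hsub
  exact ⟨t, h1, h2⟩

end Core3
section Final

variable {d : ℕ} {S S' : Set (Euc d)} {h hinv : Euc d → Euc d}

theorem grid_subset (CA : DiscreteCoordination S) : CA.grid ⊆ S := by
  intro z hz
  rcases mem_iUnion.1 hz with ⟨jj, hz⟩
  rcases mem_iUnion.1 hz with ⟨kk, hz⟩
  exact hz.1

theorem gammaB_inj (hS' : IsOpen S') (CB : DiscreteCoordination S')
    {t t' : (j : Fin d) × Fin (CB.n j)}
    (heq : Gamma S' t.1 (CB.A t.1 t.2) = Gamma S' t'.1 (CB.A t'.1 t'.2)) : t = t' := by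
  obtain ⟨j, k⟩ := t
  obtain ⟨j', k'⟩ := t'
  obtain ⟨hj, hb⟩ := gamma_rep_unique hS' (CB.sep j k).1.nonempty heq
  subst hj
  have := (CB.mono j).injective hb
  subst this
  rfl

theorem sameAxis_inter (CB : DiscreteCoordination S') {t t' : (j : Fin d) × Fin (CB.n j)}
    (hne : (Gamma S' t.1 (CB.A t.1 t.2) ∩ Gamma S' t'.1 (CB.A t'.1 t'.2)).Nonempty)
    (hax : t.1 = t'.1) : t = t' := by
  obtain ⟨j, k⟩ := t
  obtain ⟨j', k'⟩ := t'
  simp only at hax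
  subst hax
  obtain ⟨z, hz1, hz2⟩ := hne
  have : CB.A j k = CB.A j k' := by rw [← hz1.2, ← hz2.2]
  have := (CB.mono j).injective this
  subst this
  rfl

theorem sigma_reconstruct {n : Fin d → ℕ} (t : (j : Fin d) × Fin (n j)) (j : Fin d)
    (hj : t.1 = j) : t = ⟨j, Fin.cast (congrArg n hj) t.2⟩ := by
  obtain ⟨j2, k2⟩ := t
  simp only at hj
  subst hj
  rfl

end Final
/-- **Correspondence of halves along matched axes.** -/
theorem halves_correspondence
    {d : ℕ} {S S' : Set (Euc d)} (hS : IsOpen S) (hSc : IsConnected S)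
    (hS' : IsOpen S') (hS'c : IsConnected S')
    {h hinv : Euc d → Euc d} (hdiff : IsSmoothDiffeoOn h hinv S S')
    (CA : DiscreteCoordination S) (hbb : CA.HasBackbone)
    (CB : DiscreteCoordination S')
    (hgrid : h '' CA.grid = CB.grid) :
    ∃ σ : Equiv.Perm (Fin d), ∀ i : Fin d,
      CA.n i = CB.n (σ i) ∧
      {C : Set (Euc d) | ∃ k : Fin (CA.n i),
          C = h '' GammaNeg S i (CA.A i k) ∨ C = h '' GammaPos S i (CA.A i k)} =
        {C : Set (Euc d) | ∃ k : Fin (CB.n (σ i)),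
          C = GammaNeg S' (σ i) (CB.A (σ i) k) ∨ C = GammaPos S' (σ i) (CB.A (σ i) k)} := by
  classical
  obtain ⟨kstar, -, hbb2⟩ := hbb
  have himgA : ∀ (s : (i : Fin d) × Fin (CA.n i)), ∀ z ∈ Gamma S s.1 (CA.A s.1 s.2),
      h z ∈ CB.grid := by
    intro s z hz
    rw [← hgrid]
    exact ⟨z, mem_iUnion.2 ⟨s.1, mem_iUnion.2 ⟨s.2, hz⟩⟩, rfl⟩
  have hgrid' : hinv '' CB.grid = CA.grid := by
    rw [← hgrid]
    ext w
    constructor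
    · rintro ⟨z', ⟨z, hz, rfl⟩, rfl⟩
      rw [hdiff.left_inv z (grid_subset CA hz)]
      exact hz
    · intro hw
      exact ⟨h w, ⟨w, hw, rfl⟩, hdiff.left_inv w (grid_subset CA hw)⟩
  have himgB : ∀ (t : (j : Fin d) × Fin (CB.n j)), ∀ z ∈ Gamma S' t.1 (CB.A t.1 t.2),
      hinv z ∈ CA.grid := by
    intro t z hz
    rw [← hgrid']
    exact ⟨z, mem_iUnion.2 ⟨t.1, mem_iUnion.2 ⟨t.2, hz⟩⟩, rfl⟩
  have hmatchF : ∀ s : (i : Fin d) × Fin (CA.n i), ∃ t : (j : Fin d) × Fin (CB.n j),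
      h '' Gamma S s.1 (CA.A s.1 s.2) = Gamma S' t.1 (CB.A t.1 t.2) ∧
      ((h '' GammaNeg S s.1 (CA.A s.1 s.2) = GammaNeg S' t.1 (CB.A t.1 t.2) ∧
        h '' GammaPos S s.1 (CA.A s.1 s.2) = GammaPos S' t.1 (CB.A t.1 t.2)) ∨
       (h '' GammaNeg S s.1 (CA.A s.1 s.2) = GammaPos S' t.1 (CB.A t.1 t.2) ∧
        h '' GammaPos S s.1 (CA.A s.1 s.2) = GammaNeg S' t.1 (CB.A t.1 t.2))) :=
    fun s => separator_image hS hS' hdiff CB (CA.sep s.1 s.2) (himgA s)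
  choose F Fspec using hmatchF
  have hmatchG : ∀ t : (j : Fin d) × Fin (CB.n j), ∃ s : (i : Fin d) × Fin (CA.n i),
      hinv '' Gamma S' t.1 (CB.A t.1 t.2) = Gamma S s.1 (CA.A s.1 s.2) := by
    intro t
    obtain ⟨s, hs, -⟩ := separator_image hS' hS hdiff.symm CA (CB.sep t.1 t.2) (himgB t)
    exact ⟨s, hs⟩
  choose G Gspec using hmatchG
  have himage_inv : ∀ W ⊆ S', h '' (hinv '' W) = W := by
    intro W hW
    ext z
    constructor
    · rintro ⟨w, ⟨z', hz', rfl⟩, rfl⟩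
      rw [hdiff.right_inv z' (hW hz')]
      exact hz'
    · intro hz
      exact ⟨hinv z, ⟨z, hz, rfl⟩, hdiff.right_inv z (hW hz)⟩
  have hinvimage_inv : ∀ W ⊆ S, hinv '' (h '' W) = W := by
    intro W hW
    ext z
    constructor
    · rintro ⟨w, ⟨z', hz', rfl⟩, rfl⟩
      rw [hdiff.left_inv z' (hW hz')]
      exact hz'
    · intro hz
      exact ⟨h z, ⟨z, hz, rfl⟩, hdiff.left_inv z (hW hz)⟩
  have hFG : ∀ t, F (G t) = t := by
    intro t
    apply gammaB_inj hS' CB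
    rw [← (Fspec (G t)).1, ← Gspec t, himage_inv _ (gamma_subset S' t.1 _)]
  have hGF : ∀ s, G (F s) = s := by
    intro s
    apply gammaB_inj hS CA
    rw [← Gspec (F s), ← (Fspec s).1, hinvimage_inv _ (gamma_subset S s.1 _)]
  have hFinj : Function.Injective F := fun s s' hss => by rw [← hGF s, hss, hGF s']
  have hinter : ∀ s s' : (i : Fin d) × Fin (CA.n i),
      (Gamma S s.1 (CA.A s.1 s.2) ∩ Gamma S s'.1 (CA.A s'.1 s'.2)).Nonempty →
      (Gamma S' (F s).1 (CB.A (F s).1 (F s).2) ∩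
        Gamma S' (F s').1 (CB.A (F s').1 (F s').2)).Nonempty := by
    rintro s s' ⟨z, hz1, hz2⟩
    exact ⟨h z, (Fspec s).1 ▸ ⟨z, hz1, rfl⟩, (Fspec s').1 ▸ ⟨z, hz2, rfl⟩⟩
  set β : Fin d → Fin d := fun i => (F ⟨i, kstar i⟩).1 with hβ
  have haxne : ∀ (i i' : Fin d), i' ≠ i → ∀ k : Fin (CA.n i'),
      (F ⟨i, kstar i⟩).1 ≠ (F ⟨i', k⟩).1 := by
    intro i i' hne k heq
    have hint := hinter ⟨i, kstar i⟩ ⟨i', k⟩ (hbb2 i i' hne k)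
    have h1 := sameAxis_inter CB hint heq
    have h2 := hFinj h1
    have h3 : i = i' := congrArg Sigma.fst h2
    exact hne h3.symm
  have hβinj : Function.Injective β := by
    intro i i' heq
    by_contra hne
    exact haxne i i' (Ne.symm hne) (kstar i') heq
  have hβbij : Function.Bijective β := Finite.injective_iff_bijective.1 hβinj
  have haxis : ∀ (i : Fin d) (k : Fin (CA.n i)), (F ⟨i, k⟩).1 = β i := by
    intro i k
    obtain ⟨i'', hi''⟩ := hβbij.2 (F ⟨i, k⟩).1
    by_cases hii : i'' = i
    · rw [← hi'', hii]
    · exact absurd hi'' (fun hh => haxne i'' i (fun h5 => hii h5.symm) k hh)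
  refine ⟨Equiv.ofBijective β hβbij, fun i => ?_⟩
  set ψ : Fin (CA.n i) → Fin (CB.n (β i)) :=
    fun k => Fin.cast (congrArg CB.n (haxis i k)) (F ⟨i, k⟩).2 with hψ
  have hFik : ∀ k, F ⟨i, k⟩ = ⟨β i, ψ k⟩ :=
    fun k => sigma_reconstruct (F ⟨i, k⟩) (β i) (haxis i k)
  have hψinj : Function.Injective ψ := by
    intro k k' heq
    have h1 : F ⟨i, k⟩ = F ⟨i, k'⟩ := by rw [hFik k, hFik k', heq]
    have h2 := hFinj h1
    have h3 := (Sigma.mk.inj_iff.1 h2).2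
    exact eq_of_heq h3
  have hψsurj : Function.Surjective ψ := by
    intro l
    have hFs : F (G ⟨β i, l⟩) = ⟨β i, l⟩ := hFG ⟨β i, l⟩
    have hax1 : (F (G ⟨β i, l⟩)).1 = β (G ⟨β i, l⟩).1 := haxis (G ⟨β i, l⟩).1 (G ⟨β i, l⟩).2
    have hax2 : β (G ⟨β i, l⟩).1 = β i := by
      rw [← hax1, hFs]
    have hGi : (G ⟨β i, l⟩).1 = i := hβinj hax2
    have hGeq : G ⟨β i, l⟩ = ⟨i, Fin.cast (congrArg CA.n hGi) (G ⟨β i, l⟩).2⟩ :=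
      sigma_reconstruct _ i hGi
    refine ⟨Fin.cast (congrArg CA.n hGi) (G ⟨β i, l⟩).2, ?_⟩
    have h1 : F ⟨i, Fin.cast (congrArg CA.n hGi) (G ⟨β i, l⟩).2⟩ = ⟨β i, l⟩ := by
      rw [← hGeq, hFs]
    rw [hFik] at h1
    have h3 := (Sigma.mk.inj_iff.1 h1).2
    exact eq_of_heq h3
  have hcard : CA.n i = CB.n (β i) := by
    have := Fintype.card_of_bijective (⟨hψinj, hψsurj⟩ : Function.Bijective ψ)
    simpa using this
  have hσ : (Equiv.ofBijective β hβbij) i = β i := rfl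
  rw [hσ]
  refine ⟨hcard, ?_⟩
  ext C
  simp only [mem_setOf_eq]
  constructor
  · rintro ⟨k, hC⟩
    have hsp := (Fspec ⟨i, k⟩).2
    rw [hFik k] at hsp
    refine ⟨ψ k, ?_⟩
    rcases hsp with ⟨e1, e2⟩ | ⟨e1, e2⟩
    · rcases hC with rfl | rfl
      · exact Or.inl e1
      · exact Or.inr e2
    · rcases hC with rfl | rfl
      · exact Or.inr e1
      · exact Or.inl e2
  · rintro ⟨l, hC⟩
    obtain ⟨k, rfl⟩ := hψsurj l
    have hsp := (Fspec ⟨i, k⟩).2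
    rw [hFik k] at hsp
    refine ⟨k, ?_⟩
    rcases hsp with ⟨e1, e2⟩ | ⟨e1, e2⟩
    · rcases hC with rfl | rfl
      · exact Or.inl e1.symm
      · exact Or.inr e2.symm
    · rcases hC with rfl | rfl
      · exact Or.inr e2.symm
      · exact Or.inl e1.symm
end
end
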